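/- arXiv:2007.08904 — 6 statements merged into one kernel-verified Lean document; each statement's English description precedes it below -/
import Mathlib

section
/- Let A : ℝ^{n×n} → ℝ^m be a linear map satisfying the rank-2r restricted isometry property with constant δ ∈ (0,1): (1−δ)‖X‖_F² ≤ ‖A X‖₂² ≤ (1+δ)‖X‖_F² for all X with rank(X) ≤ 2r. If P is an orthogonal projector onto a subspace S of ℝ^{n×n} all of whose elements have rank at most 2r, then the operator norm of P − P∘A*∘A∘P is at most δ, where A* is the adjoint of A. -/
open Matrix
open scoped RealInnerProductSpace

noncomputable def frobNorm {p q : ℕ} (A : Matrix (Fin p) (Fin q) ℝ) : ℝ :=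
  Real.sqrt (∑ i, ∑ j, (A i j) ^ 2)

noncomputable def specNorm {p q : ℕ} (A : Matrix (Fin p) (Fin q) ℝ) : ℝ :=
  ‖LinearMap.toContinuousLinearMap (Matrix.toEuclideanLin A)‖

noncomputable def frobInner {p q : ℕ} (A B : Matrix (Fin p) (Fin q) ℝ) : ℝ :=
  (Aᵀ * B).trace

section aux
variable {p q : ℕ}

lemma frobInner_eq_sum (X Y : Matrix (Fin p) (Fin q) ℝ) :
    frobInner X Y = ∑ i, ∑ j, X i j * Y i j := by
  simp only [frobInner, Matrix.trace, Matrix.diag, Matrix.mul_apply, Matrix.transpose_apply]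
  exact Finset.sum_comm

lemma frobInner_comm (X Y : Matrix (Fin p) (Fin q) ℝ) : frobInner X Y = frobInner Y X := by
  simp only [frobInner_eq_sum, mul_comm]

lemma frobInner_self_nonneg (X : Matrix (Fin p) (Fin q) ℝ) : 0 ≤ frobInner X X := by
  rw [frobInner_eq_sum]
  exact Finset.sum_nonneg fun i _ => Finset.sum_nonneg fun j _ => mul_self_nonneg _

lemma frobInner_self_eq (X : Matrix (Fin p) (Fin q) ℝ) : frobInner X X = frobNorm X ^ 2 := by
  rw [frobNorm, Real.sq_sqrt, frobInner_eq_sum]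
  · simp [sq]
  · exact Finset.sum_nonneg fun i _ => Finset.sum_nonneg fun j _ => sq_nonneg _

lemma frobNorm_nonneg (X : Matrix (Fin p) (Fin q) ℝ) : 0 ≤ frobNorm X := Real.sqrt_nonneg _

lemma frobInner_add_left (X Y Z : Matrix (Fin p) (Fin q) ℝ) :
    frobInner (X + Y) Z = frobInner X Z + frobInner Y Z := by
  simp [frobInner, Matrix.transpose_add, Matrix.add_mul]

lemma frobInner_add_right (X Y Z : Matrix (Fin p) (Fin q) ℝ) :
    frobInner X (Y + Z) = frobInner X Y + frobInner X Z := by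
  simp [frobInner, Matrix.mul_add]

lemma frobInner_sub_left (X Y Z : Matrix (Fin p) (Fin q) ℝ) :
    frobInner (X - Y) Z = frobInner X Z - frobInner Y Z := by
  simp [frobInner, Matrix.transpose_sub, Matrix.sub_mul]

lemma frobInner_sub_right (X Y Z : Matrix (Fin p) (Fin q) ℝ) :
    frobInner X (Y - Z) = frobInner X Y - frobInner X Z := by
  simp [frobInner, Matrix.mul_sub]

lemma frobInner_smul_right (c : ℝ) (X Y : Matrix (Fin p) (Fin q) ℝ) :
    frobInner X (c • Y) = c * frobInner X Y := by
  simp [frobInner, Matrix.mul_smul, smul_eq_mul]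

lemma frobInner_zero_right (X : Matrix (Fin p) (Fin q) ℝ) : frobInner X 0 = 0 := by
  simp [frobInner]

end aux

/-- if `A` satisfies the rank-`2r` RIP with constant `δ` and `P` is an
orthogonal projector (w.r.t. the Frobenius inner product) whose range consists of matrices
of rank at most `2r`, then the operator norm of `P − P∘A*∘A∘P` is at most `δ`. -/
theorem rip_projected_operator_norm {n m r : ℕ} {δ : ℝ} (hδ0 : 0 < δ) (hδ1 : δ < 1)
    (A : Matrix (Fin n) (Fin n) ℝ →ₗ[ℝ] EuclideanSpace ℝ (Fin m))
    (Astar : EuclideanSpace ℝ (Fin m) →ₗ[ℝ] Matrix (Fin n) (Fin n) ℝ)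
    (hadj : ∀ (X : Matrix (Fin n) (Fin n) ℝ) (v : EuclideanSpace ℝ (Fin m)),
      ⟪A X, v⟫ = frobInner (Astar v) X)
    (hRIP : ∀ X : Matrix (Fin n) (Fin n) ℝ, X.rank ≤ 2 * r →
      (1 - δ) * (frobNorm X) ^ 2 ≤ ‖A X‖ ^ 2 ∧ ‖A X‖ ^ 2 ≤ (1 + δ) * (frobNorm X) ^ 2)
    (P : Matrix (Fin n) (Fin n) ℝ →ₗ[ℝ] Matrix (Fin n) (Fin n) ℝ)
    (hidem : P ∘ₗ P = P)
    (hself : ∀ X Y : Matrix (Fin n) (Fin n) ℝ, frobInner (P X) Y = frobInner X (P Y))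
    (hrank : ∀ X : Matrix (Fin n) (Fin n) ℝ, (P X).rank ≤ 2 * r) :
    ∀ Z : Matrix (Fin n) (Fin n) ℝ,
      frobNorm (P Z - P (Astar (A (P Z)))) ≤ δ * frobNorm Z := by
  have hPP : ∀ X, P (P X) = P X := fun X => LinearMap.ext_iff.mp hidem X
  intro Z
  set u := P Z with hu
  set M := P Z - P (Astar (A (P Z))) with hM
  have hPu : P u = u := hPP Z
  have hPM : P M = M := by rw [hM, map_sub]; simp only [hPP]
  -- quadratic form bound on the range of P
  have hq : ∀ w : Matrix (Fin n) (Fin n) ℝ, P w = w →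
      |frobInner w w - ‖A w‖ ^ 2| ≤ δ * frobInner w w := by
    intro w hw
    have hr : w.rank ≤ 2 * r := by rw [← hw]; exact hrank w
    obtain ⟨h1, h2⟩ := hRIP w hr
    rw [← frobInner_self_eq] at h1 h2
    rw [abs_le]
    constructor <;> nlinarith [frobInner_self_nonneg w]
  -- representation of frobInner M Y
  have hrep : ∀ Y, frobInner M Y = frobInner u (P Y) - ⟪A u, A (P Y)⟫ := by
    intro Y
    rw [hM, frobInner_sub_left]
    have h1 : frobInner (P Z) Y = frobInner u (P Y) := by
      rw [← hu, ← hPu, hself u Y, hPu]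
    have h2 : frobInner (P (Astar (A (P Z)))) Y = ⟪A u, A (P Y)⟫ := by
      rw [hself, ← hu, ← hadj (P Y) (A u), real_inner_comm]
    rw [h1, h2]
  -- polarization bound
  have hB : ∀ v : Matrix (Fin n) (Fin n) ℝ, P v = v →
      |frobInner u v - ⟪A u, A v⟫| ≤ δ / 2 * (frobInner u u + frobInner v v) := by
    intro v hv
    have hs : P (u + v) = u + v := by rw [map_add, hPu, hv]
    have hd : P (u - v) = u - v := by rw [map_sub, hPu, hv]
    have e1 : frobInner (u + v) (u + v) - ‖A (u + v)‖ ^ 2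
        = (frobInner u u - ‖A u‖ ^ 2) + (frobInner v v - ‖A v‖ ^ 2)
          + 2 * (frobInner u v - ⟪A u, A v⟫) := by
      rw [← real_inner_self_eq_norm_sq, ← real_inner_self_eq_norm_sq,
        ← real_inner_self_eq_norm_sq, map_add, frobInner_add_left, frobInner_add_right,
        frobInner_add_right, inner_add_left, inner_add_right, inner_add_right,
        frobInner_comm v u, real_inner_comm (A v) (A u)]
      ring
    have e2 : frobInner (u - v) (u - v) - ‖A (u - v)‖ ^ 2
        = (frobInner u u - ‖A u‖ ^ 2) + (frobInner v v - ‖A v‖ ^ 2)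
          - 2 * (frobInner u v - ⟪A u, A v⟫) := by
      rw [← real_inner_self_eq_norm_sq, ← real_inner_self_eq_norm_sq,
        ← real_inner_self_eq_norm_sq, map_sub, frobInner_sub_left, frobInner_sub_right,
        frobInner_sub_right, inner_sub_left, inner_sub_right, inner_sub_right,
        frobInner_comm v u, real_inner_comm (A v) (A u)]
      ring
    have epar : frobInner (u + v) (u + v) + frobInner (u - v) (u - v)
        = 2 * (frobInner u u + frobInner v v) := by
      rw [frobInner_add_left, frobInner_add_right, frobInner_add_right,
        frobInner_sub_left, frobInner_sub_right, frobInner_sub_right, frobInner_comm v u]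
      ring
    have q1 := hq (u + v) hs
    have q2 := hq (u - v) hd
    rw [abs_le] at q1 q2 ⊢
    obtain ⟨q1a, q1b⟩ := q1
    obtain ⟨q2a, q2b⟩ := q2
    have epδ : δ * frobInner (u + v) (u + v) + δ * frobInner (u - v) (u - v)
        = 2 * (δ * frobInner u u) + 2 * (δ * frobInner v v) := by
      have := congrArg (fun t => δ * t) epar
      linarith [this]
    constructor <;> nlinarith [q1a, q1b, q2a, q2b, e1, e2, epδ]
  -- main scalar inequality
  have hmain : ∀ c : ℝ, c * frobInner M M
      ≤ δ / 2 * (frobInner u u + c ^ 2 * frobInner M M) := by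
    intro c
    have hv : P (c • M) = c • M := by rw [P.map_smul, hPM]
    have h := hB (c • M) hv
    have h1 : frobInner u (c • M) - ⟪A u, A (c • M)⟫ = c * frobInner M M := by
      have h0 := hrep (c • M)
      rw [hv] at h0
      rw [← h0, frobInner_smul_right]
    have h2 : frobInner (c • M) (c • M) = c ^ 2 * frobInner M M := by
      rw [frobInner_smul_right, frobInner_comm (c • M) M, frobInner_smul_right,
        frobInner_comm M M]
      ring
    rw [h1, h2] at h
    exact le_trans (le_abs_self _) h
  -- ‖P Z‖ ≤ ‖Z‖ (Pythagoras)
  have horth : frobInner u (Z - u) = 0 := by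
    calc frobInner u (Z - u) = frobInner (P u) (Z - u) := by rw [hPu]
      _ = frobInner u (P (Z - u)) := hself _ _
      _ = 0 := by
          have h0 : P (Z - u) = 0 := by rw [map_sub, ← hu, hPu, sub_self]
          rw [h0, frobInner_zero_right]
  have hPle : frobInner u u ≤ frobInner Z Z := by
    have hZ : u + (Z - u) = Z := by abel
    have hexp : frobInner Z Z
        = frobInner u u + frobInner (Z - u) (Z - u) + 2 * frobInner u (Z - u) := by
      conv_lhs => rw [← hZ]
      rw [frobInner_add_left, frobInner_add_right, frobInner_add_right,
        frobInner_comm (Z - u) u]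
      ring
    have := frobInner_self_nonneg (Z - u)
    rw [hexp, horth]
    linarith
  -- wrap up numerically
  have ha2 : frobInner u u = frobNorm u ^ 2 := frobInner_self_eq u
  have hb2 : frobInner M M = frobNorm M ^ 2 := frobInner_self_eq M
  have hc2 : frobInner Z Z = frobNorm Z ^ 2 := frobInner_self_eq Z
  set a := frobNorm u with had
  set b := frobNorm M with hbd
  set c0 := frobNorm Z with hcd
  have ha0 : 0 ≤ a := frobNorm_nonneg _
  have hb0 : 0 ≤ b := frobNorm_nonneg _
  have hc0 : 0 ≤ c0 := frobNorm_nonneg _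
  rw [ha2, hc2] at hPle
  have hmain' : ∀ c : ℝ, c * b ^ 2 ≤ δ / 2 * (a ^ 2 + c ^ 2 * b ^ 2) := by
    intro c
    have h := hmain c
    rw [ha2, hb2] at h
    exact h
  clear_value a b c0
  have hac : a ≤ c0 := by nlinarith [hPle, ha0, hc0]
  rcases eq_or_lt_of_le hb0 with hb | hb
  · rw [← hb]; positivity
  · rcases eq_or_lt_of_le ha0 with ha | ha
    · have h := hmain' 1
      rw [← ha] at h
      nlinarith [h, mul_pos hb hb, hδ1, hδ0.le, hc0]
    · have h := hmain' (a / b)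
      have e1 : a / b * b ^ 2 = a * b := by field_simp
      rw [e1] at h
      have h' : a * b ≤ a * (δ * a) := by
        calc a * b ≤ δ / 2 * (a ^ 2 + (a / b) ^ 2 * b ^ 2) := h
          _ = a * (δ * a) := by field_simp; ring
      have hba : b ≤ δ * a := le_of_mul_le_mul_left h' ha
      calc b ≤ δ * a := hba
        _ ≤ δ * c0 := mul_le_mul_of_nonneg_left hac hδ0.le
end

section
/- Let A : H → ℝ^m be linear on a finite-dimensional inner product space H, and let P be an orthogonal projector such that ‖A(Pz)‖₂² ≤ (1+δ)‖Pz‖² for all z ∈ H, and such that ‖A w‖₂ ≤ √(1+δ)‖w‖ for a fixed vector w ∈ H. Then ‖P A* A w‖ ≤ (1+δ)‖w‖, where A* is the adjoint of A. -/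
open scoped RealInnerProductSpace

/-- if `‖A(Pz)‖² ≤ (1+δ)‖Pz‖²` for all `z` and `‖Aw‖ ≤ √(1+δ)‖w‖` for a
fixed `w`, then `‖P A* A w‖ ≤ (1+δ)‖w‖`. -/
theorem projected_adjoint_bound {H : Type*} [NormedAddCommGroup H] [InnerProductSpace ℝ H]
    [FiniteDimensional ℝ H] {m : ℕ} {δ : ℝ} (hδ : 0 < δ)
    (A : H →ₗ[ℝ] EuclideanSpace ℝ (Fin m))
    (P : H →ₗ[ℝ] H) (hidem : P ∘ₗ P = P)
    (hself : ∀ x y : H, ⟪P x, y⟫ = ⟪x, P y⟫)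
    (hPz : ∀ z : H, ‖A (P z)‖ ^ 2 ≤ (1 + δ) * ‖P z‖ ^ 2)
    (w : H) (hw : ‖A w‖ ≤ Real.sqrt (1 + δ) * ‖w‖) :
    ‖P ((LinearMap.adjoint A) (A w))‖ ≤ (1 + δ) * ‖w‖ := by
  set v := P ((LinearMap.adjoint A) (A w)) with hv
  have hPv : P v = v := by
    have := congrArg (fun f => f ((LinearMap.adjoint A) (A w))) hidem
    simpa using this
  have hδ1 : (0:ℝ) < 1 + δ := by linarith
  have hsq : Real.sqrt (1 + δ) * Real.sqrt (1 + δ) = 1 + δ :=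
    Real.mul_self_sqrt hδ1.le
  have hAv : ‖A v‖ ≤ Real.sqrt (1 + δ) * ‖v‖ := by
    have h := hPz ((LinearMap.adjoint A) (A w))
    rw [← hv] at h
    have h2 : ‖A v‖ ^ 2 ≤ (Real.sqrt (1 + δ) * ‖v‖) ^ 2 := by
      rw [mul_pow]
      rw [Real.sq_sqrt hδ1.le]
      exact h
    have h3 := Real.sqrt_le_sqrt h2
    rwa [Real.sqrt_sq (norm_nonneg _), Real.sqrt_sq (by positivity)] at h3
  have key : ‖v‖ ^ 2 ≤ (1 + δ) * ‖w‖ * ‖v‖ := by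
    have h1 : ‖v‖ ^ 2 = ⟪v, v⟫ := (real_inner_self_eq_norm_sq v).symm
    have h2 : ⟪v, v⟫ = ⟪A w, A v⟫ := by
      calc ⟪v, v⟫ = ⟪(LinearMap.adjoint A) (A w), P v⟫ := (hself _ _)
        _ = ⟪(LinearMap.adjoint A) (A w), v⟫ := by rw [hPv]
        _ = ⟪A w, A v⟫ := LinearMap.adjoint_inner_left A _ _
    have h3 : ⟪A w, A v⟫ ≤ ‖A w‖ * ‖A v‖ := real_inner_le_norm _ _
    have h4 : ‖A w‖ * ‖A v‖ ≤ (Real.sqrt (1 + δ) * ‖w‖) * (Real.sqrt (1 + δ) * ‖v‖) :=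
      mul_le_mul hw hAv (norm_nonneg _) (by positivity)
    have h5 : (Real.sqrt (1 + δ) * ‖w‖) * (Real.sqrt (1 + δ) * ‖v‖) = (1 + δ) * ‖w‖ * ‖v‖ := by
      nlinarith [hsq]
    linarith [h1 ▸ (h2 ▸ h3 : ⟪v,v⟫ ≤ ‖A w‖ * ‖A v‖)]
  rcases eq_or_lt_of_le (norm_nonneg v) with h0 | h0
  · rw [← h0]; positivity
  · have := (mul_le_mul_iff_of_pos_right h0).mp (by nlinarith : ‖v‖ * ‖v‖ ≤ ((1 + δ) * ‖w‖) * ‖v‖)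
    exact this
end

section
/- Let M_r denote the set of tensors in ℝ^{n₁×…×n_d} of multilinear rank componentwise at most r = (r₁,…,r_d), and let H_r(Y) denote the truncated HOSVD of Y (projecting each mode onto the span of the top r_i left singular vectors of the mode-i unfolding). Then for every Y, ‖Y − H_r(Y)‖_F² ≤ Σ_{i=1}^d ‖Y − P_i Y‖_F², where P_i Y is the best approximation of Y with mode-i rank ≤ r_i; consequently ‖Y − H_r(Y)‖_F ≤ √d · ‖Y − B‖_F for any B of multilinear rank ≤ r. -/
open scoped RealInnerProductSpace

private lemma proj_norm_le {H : Type*} [NormedAddCommGroup H] [InnerProductSpace ℝ H]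
    (p : Module.End ℝ H) (hid : p * p = p)
    (hsa : ∀ x y : H, ⟪p x, y⟫ = ⟪x, p y⟫) (w : H) : ‖p w‖ ≤ ‖w‖ := by
  have h1 : ‖p w‖ ^ 2 = ⟪w, p w⟫ := by
    have : ⟪p w, p w⟫ = ⟪w, p (p w)⟫ := hsa w (p w)
    have hpp : p (p w) = p w := by
      have := congrArg (fun f : Module.End ℝ H => f w) hid
      simpa using this
    rw [hpp] at this
    rw [← real_inner_self_eq_norm_sq, this]
  have h2 : ‖p w‖ ^ 2 ≤ ‖w‖ * ‖p w‖ := h1 ▸ real_inner_le_norm w (p w)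
  rcases eq_or_lt_of_le (norm_nonneg (p w)) with h | h
  · rw [← h]; exact norm_nonneg w
  · nlinarith [h2, h]

private lemma hosvd_key {H : Type*} [NormedAddCommGroup H] [InnerProductSpace ℝ H]
    (Y : H) : ∀ (L : List (Module.End ℝ H)),
    (∀ p ∈ L, p * p = p ∧ ∀ x y : H, ⟪p x, y⟫ = ⟪x, p y⟫) →
    ‖Y - L.prod Y‖ ^ 2 ≤ (L.map (fun p => ‖Y - p Y‖ ^ 2)).sum := by
  intro L
  induction L with
  | nil => intro _; simp
  | cons p L ih =>
    intro hL
    obtain ⟨hid, hsa⟩ := hL p List.mem_cons_self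
    have ihL := ih (fun q hq => hL q (List.mem_cons_of_mem p hq))
    set Z := L.prod Y with hZ
    have hdecomp : Y - (p :: L).prod Y = (Y - p Y) + p (Y - Z) := by
      simp only [List.prod_cons, Module.End.mul_apply, map_sub]
      abel
    have horth : ⟪Y - p Y, p (Y - Z)⟫ = 0 := by
      rw [← hsa (Y - p Y) (Y - Z)]
      have : p (Y - p Y) = 0 := by
        have hpp : p (p Y) = p Y := by
          have := congrArg (fun f : Module.End ℝ H => f Y) hid
          simpa using this
        rw [map_sub, hpp, sub_self]
      rw [this, inner_zero_left]
    have hpyth : ‖Y - (p :: L).prod Y‖ ^ 2 = ‖Y - p Y‖ ^ 2 + ‖p (Y - Z)‖ ^ 2 := by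
      rw [hdecomp, norm_add_sq_real, horth]; ring
    have hcontr : ‖p (Y - Z)‖ ^ 2 ≤ ‖Y - Z‖ ^ 2 := by
      have := proj_norm_le p hid hsa (Y - Z)
      exact pow_le_pow_left₀ (norm_nonneg _) this 2
    calc ‖Y - (p :: L).prod Y‖ ^ 2 = ‖Y - p Y‖ ^ 2 + ‖p (Y - Z)‖ ^ 2 := hpyth
      _ ≤ ‖Y - p Y‖ ^ 2 + ‖Y - Z‖ ^ 2 := by linarith
      _ ≤ ‖Y - p Y‖ ^ 2 + (L.map (fun q => ‖Y - q Y‖ ^ 2)).sum := by linarith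
      _ = ((p :: L).map (fun q => ‖Y - q Y‖ ^ 2)).sum := by simp

/-- quasi-optimality of the truncated HOSVD. `P i` is the orthogonal
projection realizing the best mode-`i` approximation of `Y` (projection of mode-`i`
fibres onto the span of the top `rᵢ` left singular vectors of the mode-`i` unfolding);
the `P i` are pairwise commuting orthogonal projectors and `H_r(Y)` is their composition
applied to `Y`. If `B` has multilinear rank at most `r`, so that
`‖Y − P i Y‖ ≤ ‖Y − B‖` for each `i`, then
`‖Y − H_r(Y)‖² ≤ Σᵢ ‖Y − P i Y‖²` and `‖Y − H_r(Y)‖ ≤ √d ‖Y − B‖`. -/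
theorem hosvd_quasi_optimal {H : Type*} [NormedAddCommGroup H] [InnerProductSpace ℝ H]
    [FiniteDimensional ℝ H] {d : ℕ}
    (P : Fin d → Module.End ℝ H)
    (hidem : ∀ i, P i * P i = P i)
    (hself : ∀ i (x y : H), ⟪P i x, y⟫ = ⟪x, P i y⟫)
    (hcomm : ∀ i j, P i * P j = P j * P i)
    (Y B : H)
    (hB : ∀ i, ‖Y - P i Y‖ ≤ ‖Y - B‖) :
    ‖Y - ((List.finRange d).map P).prod Y‖ ^ 2 ≤ ∑ i, ‖Y - P i Y‖ ^ 2 ∧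
    ‖Y - ((List.finRange d).map P).prod Y‖ ≤ Real.sqrt d * ‖Y - B‖ := by
  have hkey := hosvd_key Y ((List.finRange d).map P) (by
    intro p hp
    rw [List.mem_map] at hp
    obtain ⟨i, _, rfl⟩ := hp
    exact ⟨hidem i, hself i⟩)
  have hsum : (((List.finRange d).map P).map (fun p => ‖Y - p Y‖ ^ 2)).sum
      = ∑ i, ‖Y - P i Y‖ ^ 2 := by
    rw [List.map_map]
    simp [Finset.sum, Finset.univ, Fintype.elems, List.finRange, Function.comp_def]
  have h1 : ‖Y - ((List.finRange d).map P).prod Y‖ ^ 2 ≤ ∑ i, ‖Y - P i Y‖ ^ 2 := by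
    rw [← hsum]; exact hkey
  refine ⟨h1, ?_⟩
  have h2 : ∑ i, ‖Y - P i Y‖ ^ 2 ≤ (d : ℝ) * ‖Y - B‖ ^ 2 := by
    calc ∑ i, ‖Y - P i Y‖ ^ 2 ≤ ∑ _i : Fin d, ‖Y - B‖ ^ 2 :=
          Finset.sum_le_sum (fun i _ => pow_le_pow_left₀ (norm_nonneg _) (hB i) 2)
      _ = (d : ℝ) * ‖Y - B‖ ^ 2 := by simp [mul_comm]
  have h3 : ‖Y - ((List.finRange d).map P).prod Y‖ ^ 2 ≤ (Real.sqrt d * ‖Y - B‖) ^ 2 := by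
    rw [mul_pow, Real.sq_sqrt (Nat.cast_nonneg d)]
    linarith
  have hnn : (0:ℝ) ≤ Real.sqrt d * ‖Y - B‖ := by positivity
  calc ‖Y - ((List.finRange d).map P).prod Y‖
      = Real.sqrt (‖Y - ((List.finRange d).map P).prod Y‖ ^ 2) :=
        (Real.sqrt_sq (norm_nonneg _)).symm
    _ ≤ Real.sqrt ((Real.sqrt d * ‖Y - B‖) ^ 2) := Real.sqrt_le_sqrt h3
    _ = Real.sqrt d * ‖Y - B‖ := Real.sqrt_sq hnn
end

section
/- For matrices (d = 2): if Y ∈ ℝ^{n₁×n₂} and H_r(Y) = U U^T Y V V^T where U, V contain the top r left and right singular vectors of Y respectively, then ‖Y − H_r(Y)‖_F ≤ √2 · min{‖Y − B‖_F : rank(B) ≤ r}. -/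
open Matrix

noncomputable def frobSq {p q : ℕ} (A : Matrix (Fin p) (Fin q) ℝ) : ℝ :=
  ∑ i, ∑ j, (A i j) ^ 2

lemma frobSq_nonneg {p q : ℕ} (A : Matrix (Fin p) (Fin q) ℝ) : 0 ≤ frobSq A := by
  apply Finset.sum_nonneg; intro i _
  apply Finset.sum_nonneg; intro j _
  positivity

lemma frobNorm_eq {p q : ℕ} (A : Matrix (Fin p) (Fin q) ℝ) :
    frobNorm A = Real.sqrt (frobSq A) := rfl

lemma frobSq_eq_trace {p q : ℕ} (A : Matrix (Fin p) (Fin q) ℝ) :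
    frobSq A = Matrix.trace (Aᵀ * A) := by
  unfold frobSq Matrix.trace
  rw [Finset.sum_comm]
  simp [Matrix.mul_apply, Matrix.diag, Matrix.transpose_apply, sq]

lemma frobSq_add {p q : ℕ} (A C : Matrix (Fin p) (Fin q) ℝ) :
    frobSq (A + C) = frobSq A + 2 * Matrix.trace (Aᵀ * C) + frobSq C := by
  rw [frobSq_eq_trace, frobSq_eq_trace, frobSq_eq_trace]
  have h : Matrix.trace (Cᵀ * A) = Matrix.trace (Aᵀ * C) := by
    rw [← Matrix.trace_transpose (Cᵀ * A)]
    simp [Matrix.transpose_mul]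
  rw [Matrix.transpose_add, Matrix.add_mul, Matrix.mul_add, Matrix.mul_add,
    Matrix.trace_add, Matrix.trace_add, Matrix.trace_add, h]
  ring

/-- matrix (d = 2) case of the quasi-optimality of truncated HOSVD.
`U` and `V` contain the top `r` left/right singular vectors of `Y`, which by
Eckart–Young is expressed by saying that `UUᵀY` (resp. `YVVᵀ`) is at least as
good an approximation of `Y` in Frobenius norm as any matrix of rank at most `r`.
Then `‖Y − UUᵀYVVᵀ‖_F ≤ √2 · min{‖Y − B‖_F : rank B ≤ r}`. -/
theorem hosvd_matrix_case {n₁ n₂ r : ℕ}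
    (Y : Matrix (Fin n₁) (Fin n₂) ℝ)
    (U : Matrix (Fin n₁) (Fin r) ℝ) (V : Matrix (Fin n₂) (Fin r) ℝ)
    (hU : Uᵀ * U = 1) (hV : Vᵀ * V = 1)
    (hUbest : ∀ B : Matrix (Fin n₁) (Fin n₂) ℝ, B.rank ≤ r →
      frobNorm (Y - U * Uᵀ * Y) ≤ frobNorm (Y - B))
    (hVbest : ∀ B : Matrix (Fin n₁) (Fin n₂) ℝ, B.rank ≤ r →
      frobNorm (Y - Y * (V * Vᵀ)) ≤ frobNorm (Y - B)) :
    ∀ B : Matrix (Fin n₁) (Fin n₂) ℝ, B.rank ≤ r →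
      frobNorm (Y - U * Uᵀ * Y * (V * Vᵀ)) ≤ Real.sqrt 2 * frobNorm (Y - B) := by
  intro B hB
  set P := U * Uᵀ with hP
  set Q := V * Vᵀ with hQ
  have hPsymm : Pᵀ = P := by rw [hP]; simp [Matrix.transpose_mul]
  have hPP : P * P = P := by
    rw [hP]; rw [Matrix.mul_assoc, ← Matrix.mul_assoc Uᵀ U Uᵀ, hU, Matrix.one_mul]
  set M := Y - Y * Q with hM
  -- decomposition
  have hdecomp : Y - U * Uᵀ * Y * Q = (Y - P * Y) + P * M := by
    rw [hM, hP]
    rw [Matrix.mul_sub]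
    rw [← Matrix.mul_assoc (U * Uᵀ) Y Q]
    rw [Matrix.mul_assoc]
    abel
  -- cross term zero
  have hcross : Matrix.trace ((Y - P * Y)ᵀ * (P * M)) = 0 := by
    have : (Y - P * Y)ᵀ * (P * M) = 0 := by
      rw [Matrix.transpose_sub, Matrix.transpose_mul, hPsymm, Matrix.sub_mul]
      have h' : Yᵀ * P * (P * M) = Yᵀ * P * M := by
        rw [← Matrix.mul_assoc, Matrix.mul_assoc Yᵀ P P, hPP]
      rw [← Matrix.mul_assoc, h', sub_self]
    rw [this, Matrix.trace_zero]
  -- contraction: frobSq (P*M) ≤ frobSq M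
  have hcontr : frobSq (P * M) ≤ frobSq M := by
    have hdM : M = P * M + (M - P * M) := by abel
    have hc2 : Matrix.trace ((P * M)ᵀ * (M - P * M)) = 0 := by
      have : (P * M)ᵀ * (M - P * M) = 0 := by
        rw [Matrix.transpose_mul, hPsymm, Matrix.mul_sub]
        simp only [hP, Matrix.mul_assoc]
        rw [show Uᵀ * (U * (Uᵀ * M)) = Uᵀ * M from by
          rw [← Matrix.mul_assoc, hU, Matrix.one_mul], sub_self]
      rw [this, Matrix.trace_zero]
    calc frobSq (P * M) ≤ frobSq (P * M) + frobSq (M - P * M) := by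
          linarith [frobSq_nonneg (M - P * M)]
      _ = frobSq M := by
          conv_rhs => rw [hdM]
          rw [frobSq_add, hc2]; ring
  -- pythagoras
  have hpyth : frobSq (Y - U * Uᵀ * Y * Q) = frobSq (Y - P * Y) + frobSq (P * M) := by
    rw [hdecomp, frobSq_add, hcross]; ring
  -- bound pieces by B using hypotheses
  have hsq_of_norm : ∀ (A C : Matrix (Fin n₁) (Fin n₂) ℝ),
      frobNorm A ≤ frobNorm C → frobSq A ≤ frobSq C := by
    intro A C h
    have hA : frobSq A = frobNorm A ^ 2 := by
      rw [frobNorm_eq, Real.sq_sqrt (frobSq_nonneg A)]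
    have hC : frobSq C = frobNorm C ^ 2 := by
      rw [frobNorm_eq, Real.sq_sqrt (frobSq_nonneg C)]
    rw [hA, hC]
    have := Real.sqrt_nonneg (frobSq A)
    exact pow_le_pow_left₀ (by rw [frobNorm_eq]; exact this) h 2
  have h1 : frobSq (Y - P * Y) ≤ frobSq (Y - B) := hsq_of_norm _ _ (by
    have := hUbest B hB
    rwa [hP])
  have h2 : frobSq M ≤ frobSq (Y - B) := hsq_of_norm _ _ (by
    have := hVbest B hB
    rwa [hM, hQ])
  have hmain : frobSq (Y - U * Uᵀ * Y * Q) ≤ 2 * frobSq (Y - B) := by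
    rw [hpyth]; linarith
  rw [frobNorm_eq, frobNorm_eq]
  calc Real.sqrt (frobSq (Y - U * Uᵀ * Y * Q))
      ≤ Real.sqrt (2 * frobSq (Y - B)) := Real.sqrt_le_sqrt hmain
    _ = Real.sqrt 2 * Real.sqrt (frobSq (Y - B)) := Real.sqrt_mul (by norm_num) _
end

section
/- One-step contraction for Riemannian gradient descent on matrices: let A satisfy rank-2r RIP with constant δ, T a rank-r matrix, y = A(T), T_l a rank-r iterate with tangent-space projector P_l, α_l = ‖P_l G_l‖_F²/‖A P_l G_l‖₂² with G_l = A*(A T_l − y), and T_{l+1} = H_r(T_l − α_l P_l G_l) with H_r a map satisfying ‖W − H_r(W)‖_F ≤ √2‖W − T‖_F for all W. Then ‖T_{l+1} − T‖_F ≤ (√2+1)·( 2δ/(1−δ) + (1 + (1+δ)/(1−δ))·‖T−T_l‖_F/σ_r(T) )·‖T_l − T‖_F ≤ (√2+1)( 2δ/(1−δ)·‖T_l−T‖_F + (1 + 1/(1−δ)·(1+δ))·‖T−T_l‖_F²/σ_r(T) ). -/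
open Matrix
open scoped RealInnerProductSpace

namespace RG
variable {p q k : ℕ}

noncomputable def toE : Matrix (Fin p) (Fin q) ℝ ≃ₗ[ℝ] EuclideanSpace ℝ (Fin p × Fin q) where
  toFun M := WithLp.toLp 2 (fun (ij : Fin p × Fin q) => M ij.1 ij.2)
  invFun f := Matrix.of fun i j => f (i, j)
  map_add' _ _ := rfl
  map_smul' _ _ := rfl
  left_inv _ := rfl
  right_inv _ := rfl

lemma frobInner_eq (A B : Matrix (Fin p) (Fin q) ℝ) :
    frobInner A B = ∑ i, ∑ j, A i j * B i j := by
  unfold frobInner Matrix.trace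
  simp only [Matrix.diag, Matrix.mul_apply, Matrix.transpose_apply]
  rw [Finset.sum_comm]

lemma inner_toE (A B : Matrix (Fin p) (Fin q) ℝ) :
    ⟪toE A, toE B⟫ = frobInner A B := by
  rw [frobInner_eq]
  simp [toE, PiLp.inner_apply, RCLike.inner_apply, Fintype.sum_prod_type]
  exact Finset.sum_congr rfl fun i _ => Finset.sum_congr rfl fun j _ => mul_comm _ _

lemma norm_toE (A : Matrix (Fin p) (Fin q) ℝ) : ‖toE A‖ = frobNorm A := by
  rw [EuclideanSpace.norm_eq, frobNorm]
  congr 1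
  rw [Fintype.sum_prod_type]
  simp [toE, sq_abs]
  rfl

lemma frobNorm_nonneg (A : Matrix (Fin p) (Fin q) ℝ) : 0 ≤ frobNorm A := Real.sqrt_nonneg _

lemma frobInner_self (A : Matrix (Fin p) (Fin q) ℝ) : frobInner A A = frobNorm A ^ 2 := by
  rw [← inner_toE, ← norm_toE, real_inner_self_eq_norm_sq]

lemma frobInner_comm (A B : Matrix (Fin p) (Fin q) ℝ) : frobInner A B = frobInner B A := by
  unfold frobInner
  rw [← Matrix.trace_transpose (Aᵀ * B), Matrix.transpose_mul, Matrix.transpose_transpose]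

lemma frobNorm_neg (A : Matrix (Fin p) (Fin q) ℝ) : frobNorm (-A) = frobNorm A := by
  rw [← norm_toE, map_neg, norm_neg, norm_toE]

lemma frobNorm_sub_comm (A B : Matrix (Fin p) (Fin q) ℝ) :
    frobNorm (A - B) = frobNorm (B - A) := by
  rw [← frobNorm_neg (A - B), neg_sub]

lemma frobNorm_triangle (A B : Matrix (Fin p) (Fin q) ℝ) :
    frobNorm (A + B) ≤ frobNorm A + frobNorm B := by
  rw [← norm_toE, ← norm_toE, ← norm_toE, map_add]
  exact norm_add_le _ _

lemma frobNorm_smul (c : ℝ) (A : Matrix (Fin p) (Fin q) ℝ) :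
    frobNorm (c • A) = |c| * frobNorm A := by
  rw [← norm_toE, _root_.map_smul, norm_smul, Real.norm_eq_abs, norm_toE]

lemma frobNorm_eq_zero {A : Matrix (Fin p) (Fin q) ℝ} (h : frobNorm A = 0) : A = 0 := by
  rw [← norm_toE] at h
  have := norm_eq_zero.mp h
  have h2 := congrArg toE.symm this
  rwa [toE.symm_apply_apply, map_zero] at h2

lemma frobNorm_pos {A : Matrix (Fin p) (Fin q) ℝ} (h : A ≠ 0) : 0 < frobNorm A := by
  rcases eq_or_lt_of_le (frobNorm_nonneg A) with h0 | h0
  · exact absurd (frobNorm_eq_zero h0.symm) h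
  · exact h0

lemma frobNorm_eq_of_inner_eq {a b c d : ℕ} {A : Matrix (Fin a) (Fin b) ℝ}
    {B : Matrix (Fin c) (Fin d) ℝ}
    (h : frobInner A A = frobInner B B) : frobNorm A = frobNorm B := by
  have h1 := frobInner_self A
  have h2 := frobInner_self B
  rw [h1, h2] at h
  have := congrArg Real.sqrt h
  rwa [Real.sqrt_sq (frobNorm_nonneg A), Real.sqrt_sq (frobNorm_nonneg B)] at this

lemma frobNorm_sq (A : Matrix (Fin p) (Fin q) ℝ) :
    frobNorm A ^ 2 = ∑ i, ∑ j, (A i j) ^ 2 := by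
  rw [frobNorm, Real.sq_sqrt]
  positivity

lemma frobNorm_le_of_sq {A : Matrix (Fin p) (Fin q) ℝ} {L : ℝ} (hL : 0 ≤ L)
    (h : frobNorm A ^ 2 ≤ L ^ 2) : frobNorm A ≤ L :=
  (pow_le_pow_iff_left₀ (frobNorm_nonneg A) hL two_ne_zero).mp h

lemma frobNorm_mul_col_le (X : Matrix (Fin p) (Fin q) ℝ) (v : Matrix (Fin q) (Fin 1) ℝ) :
    frobNorm (X * v) ≤ frobNorm X * frobNorm v := by
  apply frobNorm_le_of_sq (mul_nonneg (frobNorm_nonneg _) (frobNorm_nonneg _))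
  rw [mul_pow, frobNorm_sq, frobNorm_sq, frobNorm_sq, Finset.sum_mul]
  apply Finset.sum_le_sum
  intro i _
  rw [Finset.univ_unique, Finset.sum_singleton, Matrix.mul_apply]
  calc (∑ a, X i a * v a (default : Fin 1)) ^ 2
      ≤ (∑ a, X i a ^ 2) * (∑ a, v a (default : Fin 1) ^ 2) :=
        Finset.sum_mul_sq_le_sq_mul_sq _ _ _
    _ ≤ (∑ a, X i a ^ 2) * (∑ a, ∑ j, v a j ^ 2) := by
        apply mul_le_mul_of_nonneg_left _ (by positivity)
        apply Finset.sum_le_sum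
        intro a _
        rw [Finset.univ_unique, Finset.sum_singleton]

lemma frobNorm_mul_le_of_col {L : ℝ} (hL : 0 ≤ L) (X : Matrix (Fin p) (Fin q) ℝ)
    (Y : Matrix (Fin q) (Fin k) ℝ)
    (h : ∀ v : Matrix (Fin q) (Fin 1) ℝ, frobNorm (X * v) ≤ L * frobNorm v) :
    frobNorm (X * Y) ≤ L * frobNorm Y := by
  apply frobNorm_le_of_sq (mul_nonneg hL (frobNorm_nonneg _))
  have lhs : frobNorm (X * Y) ^ 2 = ∑ j, ∑ i, (X * Y) i j ^ 2 := by
    rw [frobNorm_sq]; exact Finset.sum_comm ..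
  have rhs : (L * frobNorm Y) ^ 2 = ∑ j, L ^ 2 * ∑ a, Y a j ^ 2 := by
    rw [mul_pow, frobNorm_sq, Finset.sum_comm, Finset.mul_sum]
  rw [lhs, rhs]
  apply Finset.sum_le_sum
  intro j _
  set v : Matrix (Fin q) (Fin 1) ℝ := Matrix.of (fun a (_ : Fin 1) => Y a j) with hv
  have h1 : ∀ i, (X * Y) i j = (X * v) i (default : Fin 1) := by
    intro i; simp [Matrix.mul_apply, hv]
  have h2 : frobNorm v ^ 2 = ∑ a, Y a j ^ 2 := by
    rw [frobNorm_sq]; simp [hv]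
  calc ∑ i, (X * Y) i j ^ 2 = ∑ i, ∑ jj, ((X * v) i jj) ^ 2 := by
        simp only [Finset.univ_unique, Finset.sum_singleton]
        exact Finset.sum_congr rfl fun i _ => by rw [h1]
    _ = frobNorm (X * v) ^ 2 := (frobNorm_sq _).symm
    _ ≤ (L * frobNorm v) ^ 2 := pow_le_pow_left₀ (frobNorm_nonneg _) (h v) 2
    _ = L ^ 2 * ∑ a, Y a j ^ 2 := by rw [mul_pow, h2]

lemma frobNorm_orth_left {r : ℕ} (U : Matrix (Fin p) (Fin r) ℝ) (hU : Uᵀ * U = 1)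
    (M : Matrix (Fin r) (Fin k) ℝ) : frobNorm (U * M) = frobNorm M := by
  apply frobNorm_eq_of_inner_eq
  unfold frobInner
  rw [Matrix.transpose_mul]
  rw [show Mᵀ * Uᵀ * (U * M) = Mᵀ * (Uᵀ * U) * M by simp only [Matrix.mul_assoc]]
  rw [hU, Matrix.mul_one]

lemma frobNorm_transpose (A : Matrix (Fin p) (Fin q) ℝ) : frobNorm Aᵀ = frobNorm A := by
  apply frobNorm_eq_of_inner_eq
  unfold frobInner
  rw [Matrix.transpose_transpose, Matrix.trace_mul_comm]

lemma frobNorm_orth_right {r : ℕ} (V : Matrix (Fin q) (Fin r) ℝ) (hV : Vᵀ * V = 1)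
    (M : Matrix (Fin k) (Fin r) ℝ) : frobNorm (M * Vᵀ) = frobNorm M := by
  rw [← frobNorm_transpose (M * Vᵀ), Matrix.transpose_mul, Matrix.transpose_transpose,
    frobNorm_orth_left V hV, frobNorm_transpose]

lemma frobNorm_proj_left_le (S : Matrix (Fin p) (Fin p) ℝ) (hS : Sᵀ = S) (hid : S * S = S)
    (M : Matrix (Fin p) (Fin q) ℝ) : frobNorm (S * M) ≤ frobNorm M := by
  have key : frobInner (S * M) (S * M) = frobInner (S * M) M := by
    unfold frobInner
    rw [Matrix.transpose_mul, hS]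
    rw [show Mᵀ * S * (S * M) = Mᵀ * (S * S) * M by simp only [Matrix.mul_assoc], hid]
  have h1 : ‖toE (S * M)‖ ^ 2 ≤ ‖toE (S * M)‖ * ‖toE M‖ := by
    rw [← real_inner_self_eq_norm_sq, inner_toE, key, ← inner_toE]
    exact real_inner_le_norm _ _
  have h2 : ‖toE (S * M)‖ ≤ ‖toE M‖ := by
    rcases eq_or_lt_of_le (norm_nonneg (toE (S * M))) with h | h
    · rw [← h]; exact norm_nonneg _
    · nlinarith
  rwa [norm_toE, norm_toE] at h2

lemma frobNorm_proj_right_le (S : Matrix (Fin q) (Fin q) ℝ) (hS : Sᵀ = S) (hid : S * S = S)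
    (M : Matrix (Fin p) (Fin q) ℝ) : frobNorm (M * S) ≤ frobNorm M := by
  rw [← frobNorm_transpose (M * S), Matrix.transpose_mul, hS, ← frobNorm_transpose M]
  exact frobNorm_proj_left_le S hS hid Mᵀ

lemma rank_add_le (A B : Matrix (Fin p) (Fin q) ℝ) : (A + B).rank ≤ A.rank + B.rank := by
  unfold Matrix.rank
  rw [Matrix.mulVecLin_add]
  have hr : LinearMap.range (A.mulVecLin + B.mulVecLin) ≤
      LinearMap.range A.mulVecLin ⊔ LinearMap.range B.mulVecLin := by
    rintro x ⟨v, rfl⟩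
    exact Submodule.add_mem_sup ⟨v, rfl⟩ ⟨v, rfl⟩
  exact le_trans (Submodule.finrank_mono hr)
    (Submodule.finrank_add_le_finrank_add_finrank _ _)

lemma rank_sub_le (A B : Matrix (Fin p) (Fin q) ℝ) : (A - B).rank ≤ A.rank + B.rank := by
  have hneg : (-B).rank = B.rank := by
    unfold Matrix.rank
    have : (-B).mulVecLin = -(B.mulVecLin) := by
      ext v i
      simp [Matrix.neg_mulVec]
    rw [this, LinearMap.range_neg]
  rw [sub_eq_add_neg]
  exact le_trans (rank_add_le A _) (by rw [hneg])

lemma proj_norm_le {E : Type*} [NormedAddCommGroup E] [InnerProductSpace ℝ E]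
    (p : E →ₗ[ℝ] E) (hsym : ∀ x y, ⟪p x, y⟫ = ⟪x, p y⟫) (hid : ∀ x, p (p x) = p x)
    (x : E) : ‖p x‖ ≤ ‖x‖ := by
  have h1 : ‖p x‖ ^ 2 ≤ ‖p x‖ * ‖x‖ := by
    rw [← real_inner_self_eq_norm_sq]
    calc ⟪p x, p x⟫ = ⟪x, p (p x)⟫ := hsym x (p x)
      _ = ⟪x, p x⟫ := by rw [hid]
      _ = ⟪p x, x⟫ := real_inner_comm _ _
      _ ≤ ‖p x‖ * ‖x‖ := real_inner_le_norm _ _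
  rcases eq_or_lt_of_le (norm_nonneg (p x)) with h | h
  · rw [← h]; exact norm_nonneg _
  · nlinarith

lemma spec_bound {E : Type*} [NormedAddCommGroup E] [InnerProductSpace ℝ E]
    [FiniteDimensional ℝ E] (B : E →ₗ[ℝ] E) (hsym : B.IsSymmetric)
    (a b α c : ℝ) (hc0 : 0 ≤ c)
    (hq : ∀ x : E, a * ‖x‖ ^ 2 ≤ ⟪x, B x⟫ ∧ ⟪x, B x⟫ ≤ b * ‖x‖ ^ 2)
    (hc : ∀ t : ℝ, a ≤ t → t ≤ b → |1 - α * t| ≤ c)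
    (x : E) : ‖x - α • B x‖ ≤ c * ‖x‖ := by
  set n := Module.finrank ℝ E with hn'
  have hn : Module.finrank ℝ E = n := rfl
  set bas := hsym.eigenvectorBasis hn with hbas
  have hev : ∀ i, a ≤ hsym.eigenvalues hn i ∧ hsym.eigenvalues hn i ≤ b := by
    intro i
    have hb1 : ‖bas i‖ = 1 := bas.orthonormal.1 i
    have := hq (bas i)
    rw [hb1] at this
    have happ : ⟪bas i, B (bas i)⟫ = hsym.eigenvalues hn i := by
      rw [hbas, hsym.apply_eigenvectorBasis hn i]
      rw [real_inner_smul_right, real_inner_self_eq_norm_sq,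
        show ‖hsym.eigenvectorBasis hn i‖ = 1 from (hsym.eigenvectorBasis hn).orthonormal.1 i]
      simp only [RCLike.ofReal_real_eq_id, id_eq]
      ring
    rw [happ] at this
    simpa using this
  have hrepr : ∀ z : E, ‖z‖ ^ 2 = ∑ i, (bas.repr z i) ^ 2 := by
    intro z
    rw [← bas.repr.norm_map z, EuclideanSpace.norm_eq, Real.sq_sqrt (by positivity)]
    congr 1; ext i; rw [Real.norm_eq_abs, sq_abs]
  have hkey : ∀ i, bas.repr (x - α • B x) i = (1 - α * hsym.eigenvalues hn i) * bas.repr x i := by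
    intro i
    rw [map_sub, _root_.map_smul]
    have := hsym.eigenvectorBasis_apply_self_apply hn x i
    rw [hbas]
    simp only [PiLp.sub_apply, PiLp.smul_apply, smul_eq_mul]
    rw [this]
    simp only [RCLike.ofReal_real_eq_id, id_eq]
    ring
  have hsq : ‖x - α • B x‖ ^ 2 ≤ (c * ‖x‖) ^ 2 := by
    rw [hrepr, mul_pow, hrepr x, Finset.mul_sum]
    apply Finset.sum_le_sum
    intro i _
    rw [hkey i, mul_pow]
    apply mul_le_mul_of_nonneg_right _ (sq_nonneg _)
    have := hc _ (hev i).1 (hev i).2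
    calc (1 - α * hsym.eigenvalues hn i) ^ 2
        = |1 - α * hsym.eigenvalues hn i| ^ 2 := (sq_abs _).symm
      _ ≤ c ^ 2 := pow_le_pow_left₀ (abs_nonneg _) this 2
  have := Real.sqrt_le_sqrt hsq
  rwa [Real.sqrt_sq (norm_nonneg _), Real.sqrt_sq (by positivity)] at this

lemma frobInner_add_right (X Y Z : Matrix (Fin p) (Fin q) ℝ) :
    frobInner X (Y + Z) = frobInner X Y + frobInner X Z := by
  unfold frobInner
  rw [Matrix.mul_add, Matrix.trace_add]

lemma frobInner_sub_right (X Y Z : Matrix (Fin p) (Fin q) ℝ) :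
    frobInner X (Y - Z) = frobInner X Y - frobInner X Z := by
  unfold frobInner
  rw [Matrix.mul_sub, Matrix.trace_sub]

lemma frobInner_add_left (X Y Z : Matrix (Fin p) (Fin q) ℝ) :
    frobInner (X + Y) Z = frobInner X Z + frobInner Y Z := by
  rw [frobInner_comm, frobInner_add_right, frobInner_comm Z X, frobInner_comm Z Y]

lemma frobInner_sub_left (X Y Z : Matrix (Fin p) (Fin q) ℝ) :
    frobInner (X - Y) Z = frobInner X Z - frobInner Y Z := by
  rw [frobInner_comm, frobInner_sub_right, frobInner_comm Z X, frobInner_comm Z Y]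

lemma frobInner_sym_left (S : Matrix (Fin p) (Fin p) ℝ) (hS : Sᵀ = S)
    (X Y : Matrix (Fin p) (Fin q) ℝ) : frobInner (S * X) Y = frobInner X (S * Y) := by
  unfold frobInner
  rw [Matrix.transpose_mul, hS, Matrix.mul_assoc]

lemma frobInner_sym_right (S : Matrix (Fin q) (Fin q) ℝ) (hS : Sᵀ = S)
    (X Y : Matrix (Fin p) (Fin q) ℝ) : frobInner (X * S) Y = frobInner X (Y * S) := by
  unfold frobInner
  rw [Matrix.transpose_mul, hS, ← Matrix.mul_assoc, Matrix.trace_mul_comm S (Xᵀ * Y) |>.symm]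
  rw [Matrix.mul_assoc]

lemma step_size_bounds {δ x y : ℝ} (hδ0 : 0 < δ) (hδ1 : δ < 1) (hx : 0 < x) (hy : 0 < y)
    (hl : (1 - δ) * x ≤ y) (hu : y ≤ (1 + δ) * x) :
    1 / (1 + δ) ≤ x / y ∧ x / y ≤ 1 / (1 - δ) := by
  constructor
  · rw [div_le_div_iff₀ (by linarith) hy]
    nlinarith
  · rw [div_le_div_iff₀ hy (by linarith)]
    nlinarith

lemma abs_one_sub_mul_le {δ a t : ℝ} (hδ0 : 0 < δ) (hδ1 : δ < 1)
    (hal : 1 / (1 + δ) ≤ a) (hau : a ≤ 1 / (1 - δ)) (ht1 : 1 - δ ≤ t) (ht2 : t ≤ 1 + δ) :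
    |1 - a * t| ≤ 2 * δ / (1 - δ) := by
  have h1δ : (0:ℝ) < 1 - δ := by linarith
  have h2δ : (0:ℝ) < 1 + δ := by linarith
  have ha0 : 0 ≤ a := le_trans (by positivity) hal
  have h1 : a * (1 - δ) ≤ 1 := by
    rw [le_div_iff₀ h1δ] at hau
    linarith
  have h2 : 1 ≤ a * (1 + δ) := by
    rw [div_le_iff₀ h2δ] at hal
    linarith
  have hAT1 : a * t * (1 - δ) ≤ 1 + δ := by
    nlinarith [mul_le_mul_of_nonneg_left ht2 ha0]
  have hAT2 : 1 - δ ≤ a * t * (1 + δ) := by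
    nlinarith [mul_le_mul_of_nonneg_left ht1 ha0]
  rw [abs_le]
  constructor
  · have hup : a * t ≤ (1 + δ) / (1 - δ) := by
      rw [le_div_iff₀ h1δ]
      exact hAT1
    have hid : (1 + δ) / (1 - δ) - 1 = 2 * δ / (1 - δ) := by
      field_simp
      ring
    linarith
  · have hlo : (1 - δ) / (1 + δ) ≤ a * t := by
      rw [div_le_iff₀ h2δ]
      linarith
    have hid2 : 1 - (1 - δ) / (1 + δ) = 2 * δ / (1 + δ) := by
      field_simp
      ring
    have hle : 2 * δ / (1 + δ) ≤ 2 * δ / (1 - δ) := by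
      gcongr
      linarith
    linarith

end RG
set_option maxHeartbeats 1600000 in
/-- one-step contraction of Riemannian gradient descent in the matrix case.
`A` satisfies the rank-`2r` RIP with constant `δ ∈ (0,1)`; `T = U C Vᵀ` has rank `r` with
smallest nonzero singular value at least `σr > 0`; `T_l = U_l C_l V_lᵀ` is a rank-`r`
iterate with tangent-space projector `P`; `G` is the gradient, `α` the exact line-search
step size, and `Tnext = H_r(W)` satisfies the quasi-projection bound. -/
theorem rgrad_one_step_contraction {n₁ n₂ m r : ℕ} {δ : ℝ} (hδ0 : 0 < δ) (hδ1 : δ < 1)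
    (A : Matrix (Fin n₁) (Fin n₂) ℝ →ₗ[ℝ] EuclideanSpace ℝ (Fin m))
    (Astar : EuclideanSpace ℝ (Fin m) →ₗ[ℝ] Matrix (Fin n₁) (Fin n₂) ℝ)
    (hadj : ∀ (X : Matrix (Fin n₁) (Fin n₂) ℝ) (v : EuclideanSpace ℝ (Fin m)),
      ⟪A X, v⟫ = frobInner (Astar v) X)
    (hRIP : ∀ X : Matrix (Fin n₁) (Fin n₂) ℝ, X.rank ≤ 2 * r →
      (1 - δ) * (frobNorm X) ^ 2 ≤ ‖A X‖ ^ 2 ∧ ‖A X‖ ^ 2 ≤ (1 + δ) * (frobNorm X) ^ 2)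
    (U Ul : Matrix (Fin n₁) (Fin r) ℝ) (V Vl : Matrix (Fin n₂) (Fin r) ℝ)
    (C Cl : Matrix (Fin r) (Fin r) ℝ)
    (T Tl : Matrix (Fin n₁) (Fin n₂) ℝ)
    (hU : Uᵀ * U = 1) (hV : Vᵀ * V = 1) (hUl : Ulᵀ * Ul = 1) (hVl : Vlᵀ * Vl = 1)
    (hT : T = U * C * Vᵀ) (hTl : Tl = Ul * Cl * Vlᵀ)
    (hrankT : T.rank = r) (hrankTl : Tl.rank = r)
    (σr : ℝ) (hσpos : 0 < σr)
    (hσ : ∀ v : Matrix (Fin r) (Fin 1) ℝ, σr * frobNorm v ≤ frobNorm (C * v))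
    (y : EuclideanSpace ℝ (Fin m)) (hy : y = A T)
    (P : Matrix (Fin n₁) (Fin n₂) ℝ → Matrix (Fin n₁) (Fin n₂) ℝ)
    (hP : ∀ Z, P Z = Ul * Ulᵀ * Z + Z * (Vl * Vlᵀ) - Ul * Ulᵀ * Z * (Vl * Vlᵀ))
    (G : Matrix (Fin n₁) (Fin n₂) ℝ) (hG : G = Astar (A Tl - y))
    (hAPG : A (P G) ≠ 0)
    (α : ℝ) (hα : α = (frobNorm (P G)) ^ 2 / ‖A (P G)‖ ^ 2)
    (W : Matrix (Fin n₁) (Fin n₂) ℝ) (hW : W = Tl - α • P G)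
    (Tnext : Matrix (Fin n₁) (Fin n₂) ℝ)
    (hHr : frobNorm (W - Tnext) ≤ Real.sqrt 2 * frobNorm (W - T)) :
    frobNorm (Tnext - T) ≤
      (Real.sqrt 2 + 1) *
        (2 * δ / (1 - δ) + (1 + (1 + δ) / (1 - δ)) * frobNorm (T - Tl) / σr) *
        frobNorm (Tl - T) := by
  have h1δ : (0:ℝ) < 1 - δ := by linarith
  have h2δ : (0:ℝ) < 1 + δ := by linarith
  -- projector matrices
  set Q : Matrix (Fin n₁) (Fin n₁) ℝ := Ul * Ulᵀ with hQdef
  set R : Matrix (Fin n₂) (Fin n₂) ℝ := Vl * Vlᵀ with hRdef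
  have hQt : Qᵀ = Q := by rw [hQdef, Matrix.transpose_mul, Matrix.transpose_transpose]
  have hRt : Rᵀ = R := by rw [hRdef, Matrix.transpose_mul, Matrix.transpose_transpose]
  have hQQ : Q * Q = Q := by
    rw [hQdef, show Ul * Ulᵀ * (Ul * Ulᵀ) = Ul * (Ulᵀ * Ul) * Ulᵀ by
      simp only [Matrix.mul_assoc], hUl, Matrix.mul_one]
  have hRR : R * R = R := by
    rw [hRdef, show Vl * Vlᵀ * (Vl * Vlᵀ) = Vl * (Vlᵀ * Vl) * Vlᵀ by
      simp only [Matrix.mul_assoc], hVl, Matrix.mul_one]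
  -- the tangent-space projector as a linear map
  set Pl : Matrix (Fin n₁) (Fin n₂) ℝ →ₗ[ℝ] Matrix (Fin n₁) (Fin n₂) ℝ :=
    { toFun := fun Z => Q * Z + Z * R - Q * Z * R
      map_add' := fun Z Z' => by
        simp only [Matrix.mul_add, Matrix.add_mul]
        abel
      map_smul' := fun c Z => by
        simp only [Matrix.mul_smul, Matrix.smul_mul, RingHom.id_apply, smul_sub, smul_add] }
    with hPldef
  have hPlapp : ∀ Z, Pl Z = Q * Z + Z * R - Q * Z * R := fun Z => rfl
  have hPl : ∀ Z, P Z = Pl Z := by intro Z; rw [hP Z, hPlapp]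
  have hPP : ∀ Z, Pl (Pl Z) = Pl Z := by
    intro Z
    rw [hPlapp, hPlapp]
    simp only [Matrix.mul_add, Matrix.add_mul, Matrix.mul_sub, Matrix.sub_mul]
    simp only [Matrix.mul_assoc, hRR]
    simp only [← Matrix.mul_assoc, hQQ]
    abel
  have hrankPl : ∀ Z, (Pl Z).rank ≤ 2 * r := by
    intro Z
    have hsplit : Pl Z = Q * Z + (Z - Q * Z) * R := by
      rw [hPlapp]
      simp only [Matrix.sub_mul]
      abel
    have h1 : (Q * Z).rank ≤ r := by
      calc (Q * Z).rank ≤ Q.rank := Matrix.rank_mul_le_left _ _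
        _ ≤ Ul.rank := by rw [hQdef]; exact Matrix.rank_mul_le_left _ _
        _ ≤ r := by simpa using Ul.rank_le_card_width
    have h2 : ((Z - Q * Z) * R).rank ≤ r := by
      calc ((Z - Q * Z) * R).rank ≤ R.rank := Matrix.rank_mul_le_right _ _
        _ ≤ Vl.rank := by rw [hRdef]; exact Matrix.rank_mul_le_left _ _
        _ ≤ r := by simpa using Vl.rank_le_card_width
    rw [hsplit]
    calc (Q * Z + (Z - Q * Z) * R).rank ≤ (Q * Z).rank + ((Z - Q * Z) * R).rank :=
          RG.rank_add_le _ _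
      _ ≤ r + r := Nat.add_le_add h1 h2
      _ = 2 * r := by ring
  have hPlsym : ∀ X Y : Matrix (Fin n₁) (Fin n₂) ℝ,
      frobInner (Pl X) Y = frobInner X (Pl Y) := by
    intro X Y
    rw [hPlapp, hPlapp]
    rw [RG.frobInner_sub_left, RG.frobInner_add_left, RG.frobInner_sub_right,
      RG.frobInner_add_right]
    have t1 : frobInner (Q * X) Y = frobInner X (Q * Y) := RG.frobInner_sym_left Q hQt X Y
    have t2 : frobInner (X * R) Y = frobInner X (Y * R) := RG.frobInner_sym_right R hRt X Y
    have t3 : frobInner (Q * X * R) Y = frobInner X (Q * Y * R) := by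
      rw [Matrix.mul_assoc, RG.frobInner_sym_left Q hQt, RG.frobInner_sym_right R hRt,
        ← Matrix.mul_assoc]
    rw [t1, t2, t3]
  have hQTl : Q * Tl = Tl := by
    rw [hTl, hQdef]
    rw [show Ul * Ulᵀ * (Ul * Cl * Vlᵀ) = Ul * (Ulᵀ * Ul) * (Cl * Vlᵀ) by
      simp only [Matrix.mul_assoc], hUl, Matrix.mul_one, Matrix.mul_assoc]
  have hTlR : Tl * R = Tl := by
    rw [hTl, hRdef]
    rw [show Ul * Cl * Vlᵀ * (Vl * Vlᵀ) = Ul * Cl * ((Vlᵀ * Vl) * Vlᵀ) by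
      simp only [Matrix.mul_assoc], hVl, Matrix.one_mul]
  have hPlTl : Pl Tl = Tl := by
    rw [hPlapp, hQTl, hTlR]
    abel
  -- Euclidean-space versions
  set EE := EuclideanSpace ℝ (Fin n₁ × Fin n₂) with hEE
  set ι : Matrix (Fin n₁) (Fin n₂) ℝ ≃ₗ[ℝ] EE := RG.toE with hι
  set PE : EE →ₗ[ℝ] EE := ι.toLinearMap ∘ₗ Pl ∘ₗ ι.symm.toLinearMap with hPE
  set BE : EE →ₗ[ℝ] EE :=
    ι.toLinearMap ∘ₗ (Pl ∘ₗ (Astar ∘ₗ A) ∘ₗ Pl) ∘ₗ ι.symm.toLinearMap with hBE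
  have hPEapp : ∀ M, PE (ι M) = ι (Pl M) := by
    intro M
    simp [hPE]
  have hBEapp : ∀ M, BE (ι M) = ι (Pl (Astar (A (Pl M)))) := by
    intro M
    simp [hBE]
  have hPEsym : ∀ x z : EE, ⟪PE x, z⟫ = ⟪x, PE z⟫ := by
    intro x z
    rw [show x = ι (ι.symm x) from (ι.apply_symm_apply x).symm,
      show z = ι (ι.symm z) from (ι.apply_symm_apply z).symm]
    rw [hPEapp, hPEapp, RG.inner_toE, RG.inner_toE]
    exact hPlsym _ _
  have hPEid : ∀ x : EE, PE (PE x) = PE x := by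
    intro x
    rw [show x = ι (ι.symm x) from (ι.apply_symm_apply x).symm]
    rw [hPEapp, hPEapp, hPP]
  have hBEsym : ∀ x z : EE, ⟪BE x, z⟫ = ⟪x, BE z⟫ := by
    intro x z
    rw [show x = ι (ι.symm x) from (ι.apply_symm_apply x).symm,
      show z = ι (ι.symm z) from (ι.apply_symm_apply z).symm]
    set X := ι.symm x
    set Z := ι.symm z
    rw [hBEapp, hBEapp, RG.inner_toE, RG.inner_toE]
    calc frobInner (Pl (Astar (A (Pl X)))) Z
        = frobInner (Astar (A (Pl X))) (Pl Z) := hPlsym _ _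
      _ = ⟪A (Pl Z), A (Pl X)⟫ := (hadj _ _).symm
      _ = ⟪A (Pl X), A (Pl Z)⟫ := real_inner_comm _ _
      _ = frobInner (Astar (A (Pl Z))) (Pl X) := hadj _ _
      _ = frobInner (Pl X) (Astar (A (Pl Z))) := RG.frobInner_comm _ _
      _ = frobInner X (Pl (Astar (A (Pl Z)))) := by
          rw [← hPlsym X, ← RG.frobInner_comm, ← hPlsym, RG.frobInner_comm]
  -- the tangent subspace in Euclidean coordinates
  set S : Submodule ℝ EE := LinearMap.range PE with hS
  have hmemS : ∀ x : EE, BE x ∈ S := by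
    intro x
    refine ⟨ι (Astar (A (Pl (ι.symm x)))), ?_⟩
    rw [hPEapp]
    rw [show BE x = BE (ι (ι.symm x)) by rw [ι.apply_symm_apply], hBEapp]
  set Bres : S →ₗ[ℝ] S := BE.restrict (fun x _ => hmemS x) with hBres
  have hBresapp : ∀ x : S, (Bres x : EE) = BE (x : EE) := by
    intro x; rfl
  have hBressym : Bres.IsSymmetric := by
    intro x z
    rw [Submodule.coe_inner, Submodule.coe_inner, hBresapp, hBresapp]
    exact hBEsym _ _
  -- structure of elements of S
  have hSelt : ∀ x : S, ∃ X : Matrix (Fin n₁) (Fin n₂) ℝ,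
      (x : EE) = ι X ∧ Pl X = X := by
    rintro ⟨x, w, rfl⟩
    refine ⟨Pl (ι.symm w), ?_, hPP _⟩
    show PE w = ι (Pl (ι.symm w))
    conv_lhs => rw [show w = ι (ι.symm w) from (ι.apply_symm_apply w).symm]
    rw [hPEapp]
  -- quadratic bounds on S
  have hq : ∀ x : S, (1 - δ) * ‖x‖ ^ 2 ≤ ⟪x, Bres x⟫ ∧ ⟪x, Bres x⟫ ≤ (1 + δ) * ‖x‖ ^ 2 := by
    intro x
    obtain ⟨X, hXeq, hXfix⟩ := hSelt x
    have hnorm : ‖x‖ = frobNorm X := by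
      rw [Submodule.coe_norm, hXeq, hι, RG.norm_toE]
    have hrankX : X.rank ≤ 2 * r := by rw [← hXfix]; exact hrankPl X
    have hinner : ⟪x, Bres x⟫ = ‖A X‖ ^ 2 := by
      rw [Submodule.coe_inner, hBresapp, hXeq, hBEapp, hXfix, hι, RG.inner_toE]
      calc frobInner X (Pl (Astar (A X)))
          = frobInner (Pl X) (Astar (A X)) := (hPlsym _ _).symm
        _ = frobInner X (Astar (A X)) := by rw [hXfix]
        _ = frobInner (Astar (A X)) X := RG.frobInner_comm _ _
        _ = ⟪A X, A X⟫ := (hadj _ _).symm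
        _ = ‖A X‖ ^ 2 := real_inner_self_eq_norm_sq _
    rw [hinner, hnorm]
    exact hRIP X hrankX
  -- bounds on the step size α
  have hPGne : P G ≠ 0 := by
    intro h
    apply hAPG
    rw [h, map_zero]
  have hfPG : 0 < frobNorm (P G) := RG.frobNorm_pos hPGne
  have hAPGpos : 0 < ‖A (P G)‖ := norm_pos_iff.mpr hAPG
  have hrankPG : (P G).rank ≤ 2 * r := by rw [hPl]; exact hrankPl G
  obtain ⟨hRIPl, hRIPu⟩ := hRIP (P G) hrankPG
  have hα0 : 0 ≤ α := by rw [hα]; positivity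
  have hαb := RG.step_size_bounds hδ0 hδ1
      (show (0:ℝ) < frobNorm (P G) ^ 2 by positivity)
      (show (0:ℝ) < ‖A (P G)‖ ^ 2 by positivity) hRIPl hRIPu
  rw [← hα] at hαb
  obtain ⟨hαl, hαu⟩ := hαb
  set c : ℝ := 2 * δ / (1 - δ) with hc
  have hc0 : 0 ≤ c := by positivity
  have hct : ∀ t : ℝ, 1 - δ ≤ t → t ≤ 1 + δ → |1 - α * t| ≤ c :=
    fun t ht1 ht2 => RG.abs_one_sub_mul_le hδ0 hδ1 hαl hαu ht1 ht2
  -- the error decomposition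
  set Z1 := Pl (Tl - T) with hZ1
  set Z2 := T - Pl T with hZ2
  set Y2 := Pl (Astar (A Z2)) with hY2
  have hGD : G = Astar (A (Tl - T)) := by rw [hG, hy, ← map_sub]
  have hZ1alt : Z1 = Tl - Pl T := by rw [hZ1, map_sub, hPlTl]
  have hTlT : Tl - T = Z1 - Z2 := by rw [hZ1alt, hZ2]; abel
  have hdecomp : W - T = (Z1 - α • Pl (Astar (A Z1))) + (-Z2) + α • Y2 := by
    have hlin : Pl (Astar (A (Tl - T))) = Pl (Astar (A Z1)) - Pl (Astar (A Z2)) := by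
      rw [hTlT, map_sub, map_sub, map_sub]
    have hTl' : Tl = Z1 - Z2 + T := by
      rw [← hTlT]; abel
    rw [hW, hPl, hGD, hlin, hY2, hTl']
    module
  -- Bound 1 : the tangent part, via the spectral bound
  have hZ1fix : Pl Z1 = Z1 := hPP _
  have hZ1mem : ι Z1 ∈ S := ⟨ι (Tl - T), hPEapp _⟩
  set x1 : S := ⟨ι Z1, hZ1mem⟩ with hx1
  have hspec := RG.spec_bound Bres hBressym (1 - δ) (1 + δ) α c hc0 hq hct x1
  have hBE1 : BE (ι Z1) = ι (Pl (Astar (A Z1))) := by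
    rw [hBEapp, hZ1fix]
  have hcoe : ((x1 - α • Bres x1 : S) : EE) = ι (Z1 - α • Pl (Astar (A Z1))) := by
    have h1 : ((x1 - α • Bres x1 : S) : EE) = (x1 : EE) - α • ((Bres x1 : S) : EE) := by
      push_cast
      rfl
    rw [h1, hBresapp, hx1, hBE1]
    rw [map_sub, _root_.map_smul]
  have hB1 : frobNorm (Z1 - α • Pl (Astar (A Z1))) ≤ c * frobNorm (Tl - T) := by
    have hL : ‖x1 - α • Bres x1‖ = frobNorm (Z1 - α • Pl (Astar (A Z1))) := by
      rw [Submodule.coe_norm, hcoe, hι, RG.norm_toE]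
    have hR : ‖x1‖ ≤ frobNorm (Tl - T) := by
      rw [Submodule.coe_norm]
      show ‖(ι Z1 : EE)‖ ≤ _
      rw [show ι Z1 = PE (ι (Tl - T)) from (hPEapp _).symm]
      calc ‖PE (ι (Tl - T))‖ ≤ ‖ι (Tl - T)‖ := RG.proj_norm_le PE hPEsym hPEid _
        _ = frobNorm (Tl - T) := by rw [hι, RG.norm_toE]
    calc frobNorm (Z1 - α • Pl (Astar (A Z1))) = ‖x1 - α • Bres x1‖ := hL.symm
      _ ≤ c * ‖x1‖ := hspec
      _ ≤ c * frobNorm (Tl - T) := mul_le_mul_of_nonneg_left hR hc0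
  -- Bound 3 : the cross term
  have hfactZ2 : Z2 = (1 - Q) * T * (1 - R) := by
    rw [hZ2, hPlapp]
    simp only [Matrix.sub_mul, Matrix.mul_sub, Matrix.one_mul, Matrix.mul_one]
    abel
  have hrankZ2 : Z2.rank ≤ 2 * r := by
    rw [hfactZ2]
    calc ((1 - Q) * T * (1 - R)).rank ≤ ((1 - Q) * T).rank := Matrix.rank_mul_le_left _ _
      _ ≤ T.rank := Matrix.rank_mul_le_right _ _
      _ = r := hrankT
      _ ≤ 2 * r := by omega
  have hrankY2 : Y2.rank ≤ 2 * r := hrankPl _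
  have hB3 : frobNorm Y2 ≤ (1 + δ) * frobNorm Z2 := by
    have hY2fix : Pl Y2 = Y2 := hPP _
    have hYsq : frobNorm Y2 ^ 2 = ⟪A Y2, A Z2⟫ := by
      rw [← RG.frobInner_self]
      calc frobInner Y2 Y2 = frobInner (Astar (A Z2)) (Pl Y2) := by
            rw [hY2]
            exact hPlsym _ _
        _ = frobInner (Astar (A Z2)) Y2 := by rw [hY2fix]
        _ = ⟪A Y2, A Z2⟫ := (hadj _ _).symm
    have hCS : ⟪A Y2, A Z2⟫ * ⟪A Y2, A Z2⟫ ≤ ‖A Y2‖ ^ 2 * ‖A Z2‖ ^ 2 := by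
      have h := real_inner_mul_inner_self_le (A Y2) (A Z2)
      rwa [real_inner_self_eq_norm_sq, real_inner_self_eq_norm_sq] at h
    obtain ⟨_, hAY2u⟩ := hRIP Y2 hrankY2
    obtain ⟨_, hAZ2u⟩ := hRIP Z2 hrankZ2
    have hZ2n : (0:ℝ) ≤ (1 + δ) * frobNorm Z2 :=
      mul_nonneg (by positivity) (RG.frobNorm_nonneg _)
    rcases eq_or_lt_of_le (RG.frobNorm_nonneg Y2) with h0 | h0
    · rw [← h0]
      exact hZ2n
    · apply RG.frobNorm_le_of_sq hZ2n
      have hprod : ‖A Y2‖ ^ 2 * ‖A Z2‖ ^ 2 ≤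
          ((1 + δ) * frobNorm Y2 ^ 2) * ((1 + δ) * frobNorm Z2 ^ 2) :=
        mul_le_mul hAY2u hAZ2u (sq_nonneg _) (mul_nonneg (by positivity) (sq_nonneg _))
      have hchain : frobNorm Y2 ^ 2 * frobNorm Y2 ^ 2 ≤
          ((1 + δ) * frobNorm Z2) ^ 2 * frobNorm Y2 ^ 2 := by
        calc frobNorm Y2 ^ 2 * frobNorm Y2 ^ 2
            = ⟪A Y2, A Z2⟫ * ⟪A Y2, A Z2⟫ := by rw [hYsq]
          _ ≤ ‖A Y2‖ ^ 2 * ‖A Z2‖ ^ 2 := hCS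
          _ ≤ ((1 + δ) * frobNorm Y2 ^ 2) * ((1 + δ) * frobNorm Z2 ^ 2) := hprod
          _ = ((1 + δ) * frobNorm Z2) ^ 2 * frobNorm Y2 ^ 2 := by ring
      exact le_of_mul_le_mul_right hchain (pow_pos h0 2)
  -- Bound 2 : the orthogonal part is quadratically small
  have frobNorm_zero : frobNorm (0 : Matrix (Fin r) (Fin 1) ℝ) = 0 := by
    simp [frobNorm]
  have hCsurj : ∀ w : Matrix (Fin r) (Fin 1) ℝ, ∃ v : Matrix (Fin r) (Fin 1) ℝ, C * v = w := by
    have hker : ∀ v : Fin r → ℝ, C.mulVecLin v = 0 → v = 0 := by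
      intro v hv
      set vm : Matrix (Fin r) (Fin 1) ℝ := Matrix.of (fun i (_ : Fin 1) => v i) with hvm
      have hCvm : C * vm = 0 := by
        ext i j
        have : C.mulVec v i = 0 := by rw [show C.mulVec v = 0 from hv]; rfl
        simpa [hvm, Matrix.mul_apply, Matrix.mulVec, dotProduct] using this
      have hσv := hσ vm
      rw [hCvm, frobNorm_zero] at hσv
      have hvm0 : frobNorm vm = 0 :=
        le_antisymm (by nlinarith [RG.frobNorm_nonneg vm]) (RG.frobNorm_nonneg vm)
      have := RG.frobNorm_eq_zero hvm0
      funext i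
      have := congrFun (congrFun this i) 0
      simpa [hvm] using this
    have hinj : Function.Injective C.mulVecLin :=
      LinearMap.ker_eq_bot.mp (LinearMap.ker_eq_bot'.mpr hker)
    have hsurj : Function.Surjective C.mulVecLin :=
      (LinearMap.injective_iff_surjective).mp hinj
    intro w
    obtain ⟨v, hv⟩ := hsurj (fun i => w i 0)
    refine ⟨Matrix.of (fun i (_ : Fin 1) => v i), ?_⟩
    ext i j
    have : C.mulVec v i = w i 0 := by rw [show C.mulVec v = _ from hv]
    have hj : j = 0 := Subsingleton.elim j 0
    rw [hj]
    simpa [Matrix.mul_apply, Matrix.mulVec, dotProduct] using this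
  set N := (1 - Q) * U with hN
  have hNw : ∀ w : Matrix (Fin r) (Fin 1) ℝ,
      frobNorm (N * w) ≤ (frobNorm (N * C) / σr) * frobNorm w := by
    intro w
    obtain ⟨v, rfl⟩ := hCsurj w
    rw [← Matrix.mul_assoc]
    calc frobNorm (N * C * v) ≤ frobNorm (N * C) * frobNorm v := RG.frobNorm_mul_col_le _ _
      _ ≤ frobNorm (N * C) * (frobNorm (C * v) / σr) := by
          apply mul_le_mul_of_nonneg_left _ (RG.frobNorm_nonneg _)
          rw [le_div_iff₀ hσpos]
          linarith [hσ v]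
      _ = (frobNorm (N * C) / σr) * frobNorm (C * v) := by ring
  have hQ1t : (1 - Q)ᵀ = 1 - Q := by rw [Matrix.transpose_sub, Matrix.transpose_one, hQt]
  have hQ1id : (1 - Q) * (1 - Q) = 1 - Q := by
    simp only [Matrix.sub_mul, Matrix.mul_sub, Matrix.one_mul, Matrix.mul_one, hQQ]
    abel
  have hR1t : (1 - R)ᵀ = 1 - R := by rw [Matrix.transpose_sub, Matrix.transpose_one, hRt]
  have hR1id : (1 - R) * (1 - R) = 1 - R := by
    simp only [Matrix.sub_mul, Matrix.mul_sub, Matrix.one_mul, Matrix.mul_one, hRR]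
    abel
  have hQTl0 : (1 - Q) * Tl = 0 := by rw [Matrix.sub_mul, Matrix.one_mul, hQTl, sub_self]
  have hTlR0 : Tl * (1 - R) = 0 := by rw [Matrix.mul_sub, Matrix.mul_one, hTlR, sub_self]
  have hNC : frobNorm (N * C) ≤ frobNorm (T - Tl) := by
    have h1 : N * C * Vᵀ = (1 - Q) * T := by rw [hT, hN]; simp only [Matrix.mul_assoc]
    have h2 : (1 - Q) * T = (1 - Q) * (T - Tl) := by
      rw [Matrix.mul_sub, hQTl0, sub_zero]
    calc frobNorm (N * C) = frobNorm (N * C * Vᵀ) := (RG.frobNorm_orth_right V hV _).symm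
      _ = frobNorm ((1 - Q) * (T - Tl)) := by rw [h1, h2]
      _ ≤ frobNorm (T - Tl) := RG.frobNorm_proj_left_le _ hQ1t hQ1id _
  have hCM : frobNorm (C * (Vᵀ * (1 - R))) ≤ frobNorm (T - Tl) := by
    have h1 : U * (C * (Vᵀ * (1 - R))) = T * (1 - R) := by
      rw [hT]; simp only [Matrix.mul_assoc]
    have h2 : T * (1 - R) = (T - Tl) * (1 - R) := by rw [Matrix.sub_mul, hTlR0, sub_zero]
    calc frobNorm (C * (Vᵀ * (1 - R)))
        = frobNorm (U * (C * (Vᵀ * (1 - R)))) := (RG.frobNorm_orth_left U hU _).symm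
      _ = frobNorm ((T - Tl) * (1 - R)) := by rw [h1, h2]
      _ ≤ frobNorm (T - Tl) := RG.frobNorm_proj_right_le _ hR1t hR1id _
  have hB2 : frobNorm Z2 ≤ frobNorm (T - Tl) ^ 2 / σr := by
    have hfact2 : Z2 = N * (C * (Vᵀ * (1 - R))) := by
      rw [hfactZ2, hT, hN]; simp only [Matrix.mul_assoc]
    rw [hfact2]
    calc frobNorm (N * (C * (Vᵀ * (1 - R))))
        ≤ (frobNorm (N * C) / σr) * frobNorm (C * (Vᵀ * (1 - R))) :=
          RG.frobNorm_mul_le_of_col (div_nonneg (RG.frobNorm_nonneg _) hσpos.le) _ _ hNw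
      _ ≤ (frobNorm (T - Tl) / σr) * frobNorm (T - Tl) := by
          apply mul_le_mul _ hCM (RG.frobNorm_nonneg _)
            (div_nonneg (RG.frobNorm_nonneg _) hσpos.le)
          exact (div_le_div_iff_of_pos_right hσpos).mpr hNC
      _ = frobNorm (T - Tl) ^ 2 / σr := by ring
  -- triangle inequality for the decomposition
  set X1 := Z1 - α • Pl (Astar (A Z1)) with hX1
  have htri : frobNorm (W - T) ≤ frobNorm X1 + frobNorm Z2 + α * frobNorm Y2 := by
    rw [hdecomp]
    calc frobNorm (X1 + -Z2 + α • Y2)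
        ≤ frobNorm (X1 + -Z2) + frobNorm (α • Y2) := RG.frobNorm_triangle _ _
      _ ≤ frobNorm X1 + frobNorm (-Z2) + frobNorm (α • Y2) := by
          linarith [RG.frobNorm_triangle X1 (-Z2)]
      _ = frobNorm X1 + frobNorm Z2 + α * frobNorm Y2 := by
          rw [RG.frobNorm_neg, RG.frobNorm_smul, abs_of_nonneg hα0]
  have hαδ : α * (1 + δ) ≤ (1 + δ) / (1 - δ) := by
    calc α * (1 + δ) ≤ (1 / (1 - δ)) * (1 + δ) :=
          mul_le_mul_of_nonneg_right hαu (by linarith)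
      _ = (1 + δ) / (1 - δ) := by ring
  have hcoef : (0:ℝ) ≤ 1 + (1 + δ) / (1 - δ) := by
    have := div_pos h2δ h1δ
    linarith
  have hWT : frobNorm (W - T) ≤
      (c + (1 + (1 + δ) / (1 - δ)) * frobNorm (T - Tl) / σr) * frobNorm (Tl - T) := by
    have he : frobNorm (T - Tl) = frobNorm (Tl - T) := RG.frobNorm_sub_comm _ _
    have h2 : α * frobNorm Y2 ≤ (1 + δ) / (1 - δ) * frobNorm Z2 := by
      calc α * frobNorm Y2 ≤ α * ((1 + δ) * frobNorm Z2) :=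
            mul_le_mul_of_nonneg_left hB3 hα0
        _ = (α * (1 + δ)) * frobNorm Z2 := by ring
        _ ≤ ((1 + δ) / (1 - δ)) * frobNorm Z2 :=
            mul_le_mul_of_nonneg_right hαδ (RG.frobNorm_nonneg _)
    have h4 : frobNorm Z2 + α * frobNorm Y2 ≤
        (1 + (1 + δ) / (1 - δ)) * (frobNorm (T - Tl) ^ 2 / σr) := by
      calc frobNorm Z2 + α * frobNorm Y2
          ≤ frobNorm Z2 + (1 + δ) / (1 - δ) * frobNorm Z2 := by linarith
        _ = (1 + (1 + δ) / (1 - δ)) * frobNorm Z2 := by ring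
        _ ≤ (1 + (1 + δ) / (1 - δ)) * (frobNorm (T - Tl) ^ 2 / σr) :=
            mul_le_mul_of_nonneg_left hB2 hcoef
    have heq : c * frobNorm (Tl - T) + (1 + (1 + δ) / (1 - δ)) * (frobNorm (T - Tl) ^ 2 / σr)
        = (c + (1 + (1 + δ) / (1 - δ)) * frobNorm (T - Tl) / σr) * frobNorm (Tl - T) := by
      rw [he]
      ring
    linarith [htri, hB1, h4]
  have hfinal1 : frobNorm (Tnext - T) ≤ (Real.sqrt 2 + 1) * frobNorm (W - T) := by
    have h5 : Tnext - T = (W - T) + -(W - Tnext) := by abel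
    calc frobNorm (Tnext - T) = frobNorm ((W - T) + -(W - Tnext)) := by rw [← h5]
      _ ≤ frobNorm (W - T) + frobNorm (-(W - Tnext)) := RG.frobNorm_triangle _ _
      _ = frobNorm (W - T) + frobNorm (W - Tnext) := by rw [RG.frobNorm_neg]
      _ ≤ frobNorm (W - T) + Real.sqrt 2 * frobNorm (W - T) := by linarith [hHr]
      _ = (Real.sqrt 2 + 1) * frobNorm (W - T) := by ring
  calc frobNorm (Tnext - T) ≤ (Real.sqrt 2 + 1) * frobNorm (W - T) := hfinal1
    _ ≤ (Real.sqrt 2 + 1) *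
        ((c + (1 + (1 + δ) / (1 - δ)) * frobNorm (T - Tl) / σr) * frobNorm (Tl - T)) :=
        mul_le_mul_of_nonneg_left hWT (by positivity)
    _ = (Real.sqrt 2 + 1) * (c + (1 + (1 + δ) / (1 - δ)) * frobNorm (T - Tl) / σr) *
        frobNorm (Tl - T) := by ring
end

section
/- The dimension of the manifold M_r of tensors in ℝ^{n₁×…×n_d} of multilinear rank exactly r = (r₁,…,r_d) equals ∏_{i=1}^d r_i + Σ_{j=1}^d (r_j n_j − r_j²). In the matrix case d = 2 this recovers the well-known dimension r(n₁ + n₂ − r) of the rank-r matrix manifold. -/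
open Matrix

/-- All-modes (Tucker) multilinear product: `(B ×₁ V⁽¹⁾ ⋯ ×_d V⁽ᵈ⁾)`. -/
noncomputable def tuckerMul {d : ℕ} {n r : Fin d → ℕ}
    (B : ((i : Fin d) → Fin (r i)) → ℝ)
    (V : (i : Fin d) → Matrix (Fin (n i)) (Fin (r i)) ℝ) :
    ((i : Fin d) → Fin (n i)) → ℝ :=
  fun j => ∑ k : (i : Fin d) → Fin (r i), (∏ i, V i (j i) (k i)) * B k

/-- Mode-`i` matricization (unfolding) of a tensor. -/
def modeUnfold {d : ℕ} {r : Fin d → ℕ} (i : Fin d)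
    (B : ((j : Fin d) → Fin (r j)) → ℝ) :
    Matrix (Fin (r i)) ((j : {j : Fin d // j ≠ i}) → Fin (r j.1)) ℝ :=
  fun a k => B (fun j => if h : j = i then Fin.cast (congrArg r h).symm a else k ⟨j, h⟩)

namespace TuckerAux

variable {d : ℕ} {n r : Fin d → ℕ}

def modeEquiv (r : Fin d → ℕ) (i : Fin d) :
    ((j : Fin d) → Fin (r j)) ≃ Fin (r i) × ((j : {j : Fin d // j ≠ i}) → Fin (r j.1)) where
  toFun k := (k i, fun j => k j.1)
  invFun p := fun j => if h : j = i then Fin.cast (congrArg r h).symm p.1 else p.2 ⟨j, h⟩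
  left_inv k := by
    funext j
    by_cases h : j = i
    · subst h; simp
    · simp [h]
  right_inv p := by
    refine Prod.ext ?_ ?_
    · simp
    · funext j
      simp [dif_neg j.2]

lemma modeUnfold_apply (i : Fin d) (B : ((j : Fin d) → Fin (r j)) → ℝ) (a k) :
    modeUnfold i B a k = B ((modeEquiv r i).symm (a, k)) := rfl

lemma tucker_inner (C C' : ((i : Fin d) → Fin (r i)) → ℝ)
    (U U' : (i : Fin d) → Matrix (Fin (n i)) (Fin (r i)) ℝ) :
    ∑ j, tuckerMul C U j * tuckerMul C' U' j
      = ∑ k, ∑ k', (∏ i, ((U i)ᵀ * U' i) (k i) (k' i)) * (C k * C' k') := by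
  have h1 : ∀ (j : (i : Fin d) → Fin (n i)) (k k' : (i : Fin d) → Fin (r i)),
      ((∏ i, U i (j i) (k i)) * C k) * ((∏ i, U' i (j i) (k' i)) * C' k')
        = (∏ i, U i (j i) (k i) * U' i (j i) (k' i)) * (C k * C' k') := by
    intro j k k'; rw [Finset.prod_mul_distrib]; ring
  calc ∑ j, tuckerMul C U j * tuckerMul C' U' j
      = ∑ j : (i : Fin d) → Fin (n i), ∑ k : (i : Fin d) → Fin (r i),
          ∑ k' : (i : Fin d) → Fin (r i),
          (∏ i, U i (j i) (k i) * U' i (j i) (k' i)) * (C k * C' k') := by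
        unfold tuckerMul
        refine Finset.sum_congr rfl fun j _ => ?_
        rw [Finset.sum_mul_sum]
        exact Finset.sum_congr rfl fun k _ =>
          Finset.sum_congr rfl fun k' _ => h1 j k k'
    _ = ∑ k : (i : Fin d) → Fin (r i), ∑ k' : (i : Fin d) → Fin (r i),
          ∑ j : (i : Fin d) → Fin (n i),
          (∏ i, U i (j i) (k i) * U' i (j i) (k' i)) * (C k * C' k') := by
        rw [Finset.sum_comm]
        exact Finset.sum_congr rfl fun k _ => Finset.sum_comm
    _ = ∑ k, ∑ k', (∏ i, ((U i)ᵀ * U' i) (k i) (k' i)) * (C k * C' k') := by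
        refine Finset.sum_congr rfl fun k _ => Finset.sum_congr rfl fun k' _ => ?_
        rw [← Finset.sum_mul]
        congr 1
        have h2 : ∀ i : Fin d, ((U i)ᵀ * U' i) (k i) (k' i)
            = ∑ a, U i a (k i) * U' i a (k' i) := by
          intro i; simp [Matrix.mul_apply, Matrix.transpose_apply]
        rw [Finset.prod_congr rfl fun i _ => h2 i, Fintype.prod_sum]

lemma prod_one_entry (k k' : (i : Fin d) → Fin (r i)) :
    (∏ i, (1 : Matrix (Fin (r i)) (Fin (r i)) ℝ) (k i) (k' i)) = if k = k' then 1 else 0 := by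
  simp only [Matrix.one_apply]
  rw [Fintype.prod_boole]
  simp [funext_iff]

lemma tucker_inner_V {V : (i : Fin d) → Matrix (Fin (n i)) (Fin (r i)) ℝ}
    (hV : ∀ i, (V i)ᵀ * V i = 1) (C C' : ((i : Fin d) → Fin (r i)) → ℝ) :
    ∑ j, tuckerMul C V j * tuckerMul C' V j = ∑ k, C k * C' k := by
  rw [tucker_inner]
  refine Finset.sum_congr rfl fun k _ => ?_
  simp only [hV, prod_one_entry]
  simp

lemma tucker_inner_zero (C C' : ((i : Fin d) → Fin (r i)) → ℝ)
    {U U' : (i : Fin d) → Matrix (Fin (n i)) (Fin (r i)) ℝ}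
    (i₀ : Fin d) (h : (U i₀)ᵀ * U' i₀ = 0) :
    ∑ j, tuckerMul C U j * tuckerMul C' U' j = 0 := by
  rw [tucker_inner]
  refine Finset.sum_eq_zero fun k _ => Finset.sum_eq_zero fun k' _ => ?_
  rw [Finset.prod_eq_zero (Finset.mem_univ i₀) (by simp [h]), zero_mul]

lemma tucker_self_update {V : (l : Fin d) → Matrix (Fin (n l)) (Fin (r l)) ℝ}
    (hV : ∀ l, (V l)ᵀ * V l = 1) (i : Fin d)
    (A : Matrix (Fin (n i)) (Fin (r i)) ℝ) (B : ((l : Fin d) → Fin (r l)) → ℝ) :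
    ∑ j, tuckerMul B (Function.update V i A) j * tuckerMul B (Function.update V i A) j
      = ∑ m : Fin (n i), ∑ rest : (j : {j : Fin d // j ≠ i}) → Fin (r j.1),
          ((A * modeUnfold i B) m rest) ^ 2 := by
  classical
  set U : Matrix (Fin (r i)) ((j : {j : Fin d // j ≠ i}) → Fin (r j.1)) ℝ := modeUnfold i B with hU
  set g : Fin (r i) → ((j : {j : Fin d // j ≠ i}) → Fin (r j.1)) → ((l : Fin d) → Fin (r l)) :=
    fun a rest => (modeEquiv r i).symm (a, rest) with hg
  have hg1 : ∀ a rest, g a rest i = a := by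
    intro a rest
    simp [hg, modeEquiv, Fin.ext_iff]
  have hg2 : ∀ a rest l (h : l ≠ i), g a rest l = rest ⟨l, h⟩ := by
    intro a rest l h
    simp [hg, modeEquiv, dif_neg h]
  have hBg : ∀ a rest, B (g a rest) = U a rest := fun a rest => rfl
  have hcond : ∀ (a a' : Fin (r i)) rest rest',
      ((∀ l, ∀ _ : l ≠ i, g a rest l = g a' rest' l) ↔ rest = rest') := by
    intro a a' rest rest'
    constructor
    · intro h
      funext l
      obtain ⟨v, hv⟩ := l
      rw [← hg2 a rest v hv, ← hg2 a' rest' v hv]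
      exact h v hv
    · rintro rfl l h
      rw [hg2 _ _ _ h, hg2 _ _ _ h]
  have hprod : ∀ k k' : (l : Fin d) → Fin (r l),
      (∏ l, ((Function.update V i A l)ᵀ * (Function.update V i A l)) (k l) (k' l))
        = (Aᵀ * A) (k i) (k' i) * (if ∀ l, ∀ _ : l ≠ i, k l = k' l then 1 else 0) := by
    intro k k'
    rw [← Finset.mul_prod_erase _ _ (Finset.mem_univ i)]
    congr 1
    · rw [Function.update_self]
    · have : ∀ l ∈ Finset.univ.erase i,
          ((Function.update V i A l)ᵀ * (Function.update V i A l)) (k l) (k' l)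
            = if k l = k' l then 1 else 0 := by
        intro l hl
        rw [Function.update_of_ne (Finset.ne_of_mem_erase hl), hV l, Matrix.one_apply]
      rw [Finset.prod_congr rfl this, Finset.prod_boole]
      congr 1
      simp only [eq_iff_iff]
      constructor
      · intro h l hl
        exact h l (Finset.mem_erase.mpr ⟨hl, Finset.mem_univ l⟩)
      · intro h l hl
        exact h l (Finset.ne_of_mem_erase hl)
  calc ∑ j, tuckerMul B (Function.update V i A) j * tuckerMul B (Function.update V i A) j
      = ∑ k : (l : Fin d) → Fin (r l), ∑ k' : (l : Fin d) → Fin (r l),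
          ((Aᵀ * A) (k i) (k' i) * (if ∀ l, ∀ _ : l ≠ i, k l = k' l then 1 else 0))
            * (B k * B k') := by
        rw [tucker_inner]
        exact Finset.sum_congr rfl fun k _ => Finset.sum_congr rfl fun k' _ => by
          rw [hprod]
    _ = ∑ a : Fin (r i), ∑ rest, ∑ a' : Fin (r i), ∑ rest',
          ((Aᵀ * A) a a' * (if rest = rest' then 1 else 0))
            * (U a rest * U a' rest') := by
        rw [← Equiv.sum_comp (modeEquiv r i).symm, Fintype.sum_prod_type]
        refine Finset.sum_congr rfl fun a _ => Finset.sum_congr rfl fun rest _ => ?_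
        rw [← Equiv.sum_comp (modeEquiv r i).symm, Fintype.sum_prod_type]
        refine Finset.sum_congr rfl fun a' _ => Finset.sum_congr rfl fun rest' _ => ?_
        show ((Aᵀ * A) (g a rest i) (g a' rest' i)
            * (if ∀ l, ∀ _ : l ≠ i, g a rest l = g a' rest' l then 1 else 0))
            * (B (g a rest) * B (g a' rest')) = _
        rw [hg1, hg1, hBg, hBg]
        congr 2
        exact if_congr (hcond a a' rest rest') rfl rfl
    _ = ∑ a : Fin (r i), ∑ rest, ∑ a' : Fin (r i),
          (Aᵀ * A) a a' * (U a rest * U a' rest) := by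
        refine Finset.sum_congr rfl fun a _ => Finset.sum_congr rfl fun rest _ =>
          Finset.sum_congr rfl fun a' _ => ?_
        simp [mul_ite, ite_mul, Finset.sum_ite_eq]
    _ = ∑ m : Fin (n i), ∑ rest, ((A * U) m rest) ^ 2 := by
        rw [Finset.sum_comm]
        conv_rhs => rw [Finset.sum_comm]
        refine Finset.sum_congr rfl fun rest _ => ?_
        calc ∑ a, ∑ a', (Aᵀ * A) a a' * (U a rest * U a' rest)
            = ∑ a, ∑ a', ∑ m, (A m a * U a rest) * (A m a' * U a' rest) := by
              refine Finset.sum_congr rfl fun a _ => Finset.sum_congr rfl fun a' _ => ?_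
              rw [Matrix.mul_apply, Finset.sum_mul]
              exact Finset.sum_congr rfl fun m _ => by
                rw [Matrix.transpose_apply]; ring
          _ = ∑ a, ∑ m, ∑ a', (A m a * U a rest) * (A m a' * U a' rest) :=
              Finset.sum_congr rfl fun a _ => Finset.sum_comm
          _ = ∑ m, ∑ a, ∑ a', (A m a * U a rest) * (A m a' * U a' rest) :=
              Finset.sum_comm
          _ = ∑ m, ((A * U) m rest) ^ 2 := by
              refine Finset.sum_congr rfl fun m _ => ?_
              rw [Matrix.mul_apply, sq, Finset.sum_mul_sum]

lemma tuckerMul_add (C C' : ((i : Fin d) → Fin (r i)) → ℝ)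
    (V : (i : Fin d) → Matrix (Fin (n i)) (Fin (r i)) ℝ) :
    tuckerMul (C + C') V = tuckerMul C V + tuckerMul C' V := by
  funext j
  simp [tuckerMul, mul_add, Finset.sum_add_distrib]

lemma tuckerMul_smul (c : ℝ) (C : ((i : Fin d) → Fin (r i)) → ℝ)
    (V : (i : Fin d) → Matrix (Fin (n i)) (Fin (r i)) ℝ) :
    tuckerMul (c • C) V = c • tuckerMul C V := by
  funext j
  simp only [tuckerMul, Pi.smul_apply, smul_eq_mul, Finset.mul_sum]
  exact Finset.sum_congr rfl fun k _ => by ring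

lemma tuckerMul_update (B : ((i : Fin d) → Fin (r i)) → ℝ)
    (V : (i : Fin d) → Matrix (Fin (n i)) (Fin (r i)) ℝ) (i : Fin d)
    (A : Matrix (Fin (n i)) (Fin (r i)) ℝ) :
    tuckerMul B (Function.update V i A)
      = fun j => ∑ k, (A (j i) (k i) * ∏ l ∈ Finset.univ.erase i, V l (j l) (k l)) * B k := by
  funext j
  unfold tuckerMul
  refine Finset.sum_congr rfl fun k _ => ?_
  congr 1
  rw [← Finset.mul_prod_erase _ _ (Finset.mem_univ i), Function.update_self]
  congr 1
  exact Finset.prod_congr rfl fun l hl => by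
    rw [Function.update_of_ne (Finset.ne_of_mem_erase hl)]

lemma tuckerMul_update_add (B : ((i : Fin d) → Fin (r i)) → ℝ)
    (V : (i : Fin d) → Matrix (Fin (n i)) (Fin (r i)) ℝ) (i : Fin d)
    (A A' : Matrix (Fin (n i)) (Fin (r i)) ℝ) :
    tuckerMul B (Function.update V i (A + A'))
      = tuckerMul B (Function.update V i A) + tuckerMul B (Function.update V i A') := by
  funext j
  simp only [tuckerMul_update, Pi.add_apply, Matrix.add_apply]
  rw [← Finset.sum_add_distrib]
  exact Finset.sum_congr rfl fun k _ => by ring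

lemma tuckerMul_update_smul (B : ((i : Fin d) → Fin (r i)) → ℝ)
    (V : (i : Fin d) → Matrix (Fin (n i)) (Fin (r i)) ℝ) (i : Fin d) (c : ℝ)
    (A : Matrix (Fin (n i)) (Fin (r i)) ℝ) :
    tuckerMul B (Function.update V i (c • A))
      = c • tuckerMul B (Function.update V i A) := by
  funext j
  simp only [tuckerMul_update, Pi.smul_apply, Matrix.smul_apply, smul_eq_mul, Finset.mul_sum]
  exact Finset.sum_congr rfl fun k _ => by ring

def fker (V : (i : Fin d) → Matrix (Fin (n i)) (Fin (r i)) ℝ) (i : Fin d) :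
    Matrix (Fin (n i)) (Fin (r i)) ℝ →ₗ[ℝ] Matrix (Fin (r i)) (Fin (r i)) ℝ where
  toFun A := Aᵀ * V i
  map_add' A A' := by rw [Matrix.transpose_add, Matrix.add_mul]
  map_smul' c A := by simp only [RingHom.id_apply]; rw [Matrix.transpose_smul, Matrix.smul_mul]

noncomputable def Lmap (B : ((i : Fin d) → Fin (r i)) → ℝ)
    (V : (i : Fin d) → Matrix (Fin (n i)) (Fin (r i)) ℝ) :
    ((((i : Fin d) → Fin (r i)) → ℝ) × ((i : Fin d) → LinearMap.ker (fker V i)))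
      →ₗ[ℝ] (((i : Fin d) → Fin (n i)) → ℝ) where
  toFun p := tuckerMul p.1 V + ∑ i, tuckerMul B (Function.update V i (p.2 i).1)
  map_add' p q := by
    have h2 : ∀ i : Fin d,
        tuckerMul B (Function.update V i (((p + q).2 i) : Matrix (Fin (n i)) (Fin (r i)) ℝ))
          = tuckerMul B (Function.update V i (p.2 i).1)
            + tuckerMul B (Function.update V i (q.2 i).1) := by
      intro i
      have h : (((p + q).2 i) : Matrix (Fin (n i)) (Fin (r i)) ℝ) = (p.2 i).1 + (q.2 i).1 := rfl
      rw [h, tuckerMul_update_add]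
    show tuckerMul (p.1 + q.1) V + _ = _
    rw [tuckerMul_add, Finset.sum_congr rfl fun i _ => h2 i, Finset.sum_add_distrib]
    abel_nf
  map_smul' c p := by
    have h2 : ∀ i : Fin d,
        tuckerMul B (Function.update V i (((c • p).2 i) : Matrix (Fin (n i)) (Fin (r i)) ℝ))
          = c • tuckerMul B (Function.update V i (p.2 i).1) := by
      intro i
      have h : (((c • p).2 i) : Matrix (Fin (n i)) (Fin (r i)) ℝ) = c • (p.2 i).1 := rfl
      rw [h, tuckerMul_update_smul]
    show tuckerMul (c • p.1) V + _ = _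
    rw [tuckerMul_smul, Finset.sum_congr rfl fun i _ => h2 i, ← Finset.smul_sum]
    simp [smul_add]

lemma mul_cancel_of_rank {κ ι : Type*} [Fintype κ] [Fintype ι] [DecidableEq κ] {R : ℕ}
    (U : Matrix (Fin R) κ ℝ) (hU : U.rank = R)
    (A : Matrix ι (Fin R) ℝ) (h : A * U = 0) : A = 0 := by
  have hr : Module.finrank ℝ ↥(LinearMap.range U.mulVecLin) = R := hU
  have htop : LinearMap.range U.mulVecLin = ⊤ :=
    Submodule.eq_top_of_finrank_eq (by rw [hr, Module.finrank_fin_fun])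
  ext m a
  obtain ⟨x, hx⟩ := LinearMap.range_eq_top.mp htop (Pi.single a 1)
  have h0 : A *ᵥ (U *ᵥ x) = 0 := by
    rw [Matrix.mulVec_mulVec, h, Matrix.zero_mulVec]
  have hx' : U *ᵥ x = Pi.single a 1 := hx
  rw [hx'] at h0
  have := congrFun h0 m
  simpa using this

end TuckerAux

/-- the dimension of the manifold of tensors of multilinear rank exactly
`r = (r₁, …, r_d)` equals `∏ᵢ rᵢ + Σⱼ (rⱼ nⱼ − rⱼ²)`, computed as the dimension of its
tangent space at `X = B ×₁V⁽¹⁾ ⋯ ×_d V⁽ᵈ⁾` (with `V⁽ⁱ⁾` orthonormal columns and core `B`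
of full multilinear rank), which consists of `Ḃ ×ᵢ V⁽ⁱ⁾` plus the `d` terms
`B ×_{j≠i} V⁽ʲ⁾ ×ᵢ V̇⁽ⁱ⁾` with `(V̇⁽ⁱ⁾)ᵀ V⁽ⁱ⁾ = 0`. -/
theorem dimension_of_multilinear_rank_manifold {d : ℕ} (n r : Fin d → ℕ)
    (hrn : ∀ i, r i ≤ n i)
    (B : ((i : Fin d) → Fin (r i)) → ℝ)
    (V : (i : Fin d) → Matrix (Fin (n i)) (Fin (r i)) ℝ)
    (hV : ∀ i, (V i)ᵀ * V i = 1)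
    (hB : ∀ i, (modeUnfold i B).rank = r i) :
    Module.finrank ℝ
      (Submodule.span ℝ
        {X : ((i : Fin d) → Fin (n i)) → ℝ |
          ∃ (Bdot : ((i : Fin d) → Fin (r i)) → ℝ)
            (Vdot : (i : Fin d) → Matrix (Fin (n i)) (Fin (r i)) ℝ),
            (∀ i, (Vdot i)ᵀ * V i = 0) ∧
            X = tuckerMul Bdot V +
              ∑ i, tuckerMul B (Function.update V i (Vdot i))})
      = ∏ i, r i + ∑ j, (r j * n j - (r j) ^ 2) := by
  classical
  have hset : {X : ((i : Fin d) → Fin (n i)) → ℝ |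
          ∃ (Bdot : ((i : Fin d) → Fin (r i)) → ℝ)
            (Vdot : (i : Fin d) → Matrix (Fin (n i)) (Fin (r i)) ℝ),
            (∀ i, (Vdot i)ᵀ * V i = 0) ∧
            X = tuckerMul Bdot V +
              ∑ i, tuckerMul B (Function.update V i (Vdot i))}
      = ↑(LinearMap.range (TuckerAux.Lmap B V)) := by
    ext X
    simp only [Set.mem_setOf_eq, SetLike.mem_coe, LinearMap.mem_range]
    constructor
    · rintro ⟨Bdot, Vdot, hVdot, rfl⟩
      exact ⟨(Bdot, fun i => ⟨Vdot i, LinearMap.mem_ker.mpr (hVdot i)⟩), rfl⟩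
    · rintro ⟨p, rfl⟩
      exact ⟨p.1, fun i => (p.2 i).1, fun i => LinearMap.mem_ker.mp (p.2 i).2, rfl⟩
  rw [hset, Submodule.span_eq]
  -- injectivity of Lmap
  have hinj : Function.Injective (TuckerAux.Lmap B V) := by
    rw [← LinearMap.ker_eq_bot, LinearMap.ker_eq_bot']
    intro p hp
    obtain ⟨Bdot, Vdot⟩ := p
    set t : Fin d → (((i : Fin d) → Fin (n i)) → ℝ) :=
      fun i => tuckerMul B (Function.update V i (Vdot i).1) with ht
    have hAV : ∀ i, ((Vdot i).1)ᵀ * V i = 0 := fun i => LinearMap.mem_ker.mp (Vdot i).2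
    have hVA : ∀ i, (V i)ᵀ * ((Vdot i).1) = 0 := by
      intro i
      have h := congrArg Matrix.transpose (hAV i)
      rwa [Matrix.transpose_mul, Matrix.transpose_transpose, Matrix.transpose_zero] at h
    have hLp : tuckerMul Bdot V + ∑ i, t i = 0 := hp
    have key : ∀ Y : ((i : Fin d) → Fin (n i)) → ℝ,
        (∑ j, tuckerMul Bdot V j * Y j) + ∑ i, ∑ j, t i j * Y j = 0 := by
      intro Y
      have hterm : ∀ j, (tuckerMul Bdot V j + ∑ i, t i j) * Y j = 0 := by
        intro j
        have h := congrFun hLp j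
        simp only [Pi.add_apply, Finset.sum_apply, Pi.zero_apply] at h
        rw [h, zero_mul]
      calc (∑ j, tuckerMul Bdot V j * Y j) + ∑ i, ∑ j, t i j * Y j
          = (∑ j, tuckerMul Bdot V j * Y j) + ∑ j, ∑ i, t i j * Y j := by
            rw [Finset.sum_comm]
        _ = ∑ j, (tuckerMul Bdot V j * Y j + ∑ i, t i j * Y j) :=
            Finset.sum_add_distrib.symm
        _ = ∑ j, (tuckerMul Bdot V j + ∑ i, t i j) * Y j := by
            refine Finset.sum_congr rfl fun j _ => ?_
            rw [add_mul, Finset.sum_mul]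
        _ = 0 := Finset.sum_eq_zero fun j _ => hterm j
    have hB0 : Bdot = 0 := by
      have h := key (tuckerMul Bdot V)
      rw [TuckerAux.tucker_inner_V hV] at h
      have hz : ∀ i ∈ Finset.univ, ∑ j, t i j * tuckerMul Bdot V j = 0 := fun i _ =>
        TuckerAux.tucker_inner_zero B Bdot i
          (by rw [Function.update_self]; exact hAV i)
      rw [Finset.sum_eq_zero hz, add_zero] at h
      funext k
      have := (Finset.sum_eq_zero_iff_of_nonneg
        (fun k _ => mul_self_nonneg (Bdot k))).mp h k (Finset.mem_univ k)
      exact mul_self_eq_zero.mp this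
    have hA0 : ∀ i, (Vdot i).1 = 0 := by
      intro i
      have h := key (t i)
      have h1 : ∑ j, tuckerMul Bdot V j * t i j = 0 :=
        TuckerAux.tucker_inner_zero Bdot B i
          (by rw [Function.update_self]; exact hVA i)
      have h3 : ∑ i', ∑ j, t i' j * t i j = ∑ j, t i j * t i j :=
        Finset.sum_eq_single i
          (fun i' _ hne =>
            TuckerAux.tucker_inner_zero B B i'
              (by rw [Function.update_self, Function.update_of_ne hne]; exact hAV i'))
          (fun hmem => absurd (Finset.mem_univ i) hmem)
      rw [h1, zero_add, h3, TuckerAux.tucker_self_update hV i] at h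
      have hMU : (Vdot i).1 * modeUnfold i B = 0 := by
        ext m rest
        have hm := (Finset.sum_eq_zero_iff_of_nonneg
          (fun m _ => Finset.sum_nonneg fun rest _ => sq_nonneg _)).mp h m (Finset.mem_univ m)
        have hr := (Finset.sum_eq_zero_iff_of_nonneg
          (fun rest _ => sq_nonneg _)).mp hm rest (Finset.mem_univ rest)
        simpa using (pow_eq_zero_iff two_ne_zero).mp hr
      exact TuckerAux.mul_cancel_of_rank (modeUnfold i B) (hB i) _ hMU
    refine Prod.ext hB0 (funext fun i => Subtype.ext ?_)
    simpa using hA0 i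
  rw [LinearMap.finrank_range_of_inj hinj, Module.finrank_prod]
  congr 1
  · rw [Module.finrank_fintype_fun_eq_card, Fintype.card_pi]
    exact Finset.prod_congr rfl fun i _ => Fintype.card_fin _
  · rw [Module.finrank_pi_fintype]
    refine Finset.sum_congr rfl fun i _ => ?_
    have hsurj : Function.Surjective (TuckerAux.fker V i) := by
      intro C
      refine ⟨V i * Cᵀ, ?_⟩
      show (V i * Cᵀ)ᵀ * V i = C
      rw [Matrix.transpose_mul, Matrix.transpose_transpose, Matrix.mul_assoc, hV i,
        Matrix.mul_one]
    have hrange : LinearMap.range (TuckerAux.fker V i) = ⊤ :=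
      LinearMap.range_eq_top.mpr hsurj
    have hrn2 := LinearMap.finrank_range_add_finrank_ker (TuckerAux.fker V i)
    rw [hrange, finrank_top, Module.finrank_matrix, Module.finrank_matrix] at hrn2
    simp only [Fintype.card_fin, Module.finrank_self, mul_one] at hrn2
    have := Nat.eq_sub_of_add_eq' hrn2
    rw [this, mul_comm (n i) (r i), pow_two]
end
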